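/- arXiv:2508.16353 — 2 statements merged into one kernel-verified Lean document; each statement's English description precedes it below -/
import Mathlib

section
/- Lower bound on the mixing coefficient: there is a constant c > 0 independent of k and α such that b_k ≥ c (Σ_{j∈J} α_j)^{-1} k^{-1} for all but finitely many k, where b_k is the normalization coefficient of the trial state in the upper bound for λ_0(V_k, α). -/
open Finset Filter Topology Matrix

/-- The (Neumann) discrete Laplacian matrix of the path graph with `n` vertices. -/
noncomputable def pathLap (n : ℕ) : Matrix (Fin n) (Fin n) ℝ :=
  Matrix.of fun i j =>
    if i = j then (if i.val = 0 ∨ i.val = n - 1 then (1 : ℝ) else 2)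
    else if i.val + 1 = j.val ∨ j.val + 1 = i.val then -1 else 0

/-- The diagonal potential matrix: vertex `i` of `Fin (2k+1)` represents the integer `i - k`. -/
noncomputable def potMat (k : ℕ) (α : ℤ → ℝ) : Matrix (Fin (2*k+1)) (Fin (2*k+1)) ℝ :=
  Matrix.diagonal fun i => α ((i : ℤ) - k)

/-- The discrete Schrödinger operator `H_{k,α} = L_k + Σ_j α_j δ_j` on the path `{-k,…,k}`. -/
noncomputable def Hmat (k : ℕ) (α : ℤ → ℝ) : Matrix (Fin (2*k+1)) (Fin (2*k+1)) ℝ :=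
  pathLap (2*k+1) + potMat k α

/-- The set of eigenvalues of a real matrix. -/
def evs {n : ℕ} (M : Matrix (Fin n) (Fin n) ℝ) : Set ℝ :=
  {μ | ∃ f : Fin n → ℝ, f ≠ 0 ∧ M.mulVec f = μ • f}

/-- Lowest eigenvalue. -/
noncomputable def lam0 {n : ℕ} (M : Matrix (Fin n) (Fin n) ℝ) : ℝ := sInf (evs M)

/-- Second-lowest eigenvalue (lowest eigenvalue above the ground state energy). -/
noncomputable def lam1 {n : ℕ} (M : Matrix (Fin n) (Fin n) ℝ) : ℝ :=
  sInf (evs M \ {lam0 M})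

/-- Spectral gap. -/
noncomputable def gap {n : ℕ} (M : Matrix (Fin n) (Fin n) ℝ) : ℝ := lam1 M - lam0 M

/-- `λ_0(V_m, ∞δ_0) = 2 - 2cos(π/(2m+1))`, the Dirichlet ground state energy. -/
noncomputable def dirEVZ (m : ℤ) : ℝ := 2 - 2 * Real.cos (Real.pi / (2 * m + 1))

/-- Index of the integer vertex `j ∈ {-k,…,k}` inside `Fin (2k+1)`. -/
def idx (k : ℕ) (j : ℤ) : Fin (2*k+1) := ⟨(j + k).toNat % (2*k+1), Nat.mod_lt _ (by omega)⟩

/-- `φ` is the normalized strictly positive ground state of `H_{k,α}`. -/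
noncomputable def isGS (k : ℕ) (α : ℤ → ℝ) (φ : Fin (2*k+1) → ℝ) : Prop :=
  (Hmat k α).mulVec φ = lam0 (Hmat k α) • φ ∧ (∑ i, φ i ^ 2 = 1) ∧ ∀ i, 0 < φ i

/-- The single-site potential `α δ_0`. -/
noncomputable def single0 (α : ℝ) : ℤ → ℝ := fun j => if j = 0 then α else 0

lemma sum_fin_shift (k : ℕ) (F : ℤ → ℝ) :
    ∑ i : Fin (2*k+1), F ((i:ℤ) - k) = ∑ j ∈ Finset.Icc (-(k:ℤ)) k, F j := by
  have himg : Finset.Icc (-(k:ℤ)) k = (Finset.range (2*k+1)).image (fun i : ℕ => (i:ℤ) - k) := by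
    ext j
    simp only [Finset.mem_Icc, Finset.mem_image, Finset.mem_range]
    constructor
    · intro h; exact ⟨(j+k).toNat, by omega, by omega⟩
    · rintro ⟨i, hi, rfl⟩; omega
  rw [himg, Finset.sum_image (by intro a _ b _ h; have h' : (a:ℤ) - k = (b:ℤ) - k := h; omega), ← Fin.sum_univ_eq_sum_range]

lemma sum_sq_expand (s : Finset ℤ) (u : ℤ → ℝ) (a β : ℝ) :
    ∑ j ∈ s, (a * u j + β)^2
      = a^2 * (∑ j ∈ s, (u j)^2) + 2*a*β*(∑ j ∈ s, u j) + s.card * β^2 := by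
  have h : ∀ j, (a*u j + β)^2 = a^2*(u j)^2 + (2*a*β)*u j + β^2 := fun j => by ring
  simp_rw [h]
  rw [Finset.sum_add_distrib, Finset.sum_add_distrib, ← Finset.mul_sum, ← Finset.mul_sum,
    Finset.sum_const, nsmul_eq_mul]

lemma dirEVZ_ge (k : ℕ) (hk : 1 ≤ k) : 2/(2*(k:ℝ)+1)^2 ≤ dirEVZ (k:ℤ) := by
  have hπ3 := Real.pi_gt_three
  have hπ4 := Real.pi_le_four
  have hk1 : (1:ℝ) ≤ (k:ℝ) := by exact_mod_cast hk
  set n : ℝ := 2*(k:ℝ)+1 with hndef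
  clear_value n
  have hn : (3:ℝ) ≤ n := by rw [hndef]; linarith
  have hn0 : (0:ℝ) < n := by linarith
  set x : ℝ := Real.pi/(2*n) with hx
  clear_value x
  have hx0 : 0 < x := by rw [hx]; positivity
  have hx1 : x ≤ 1 := by rw [hx, div_le_one (by linarith)]; linarith
  have hx2 : x^2 ≤ 1 := by nlinarith
  have hcube : x^3 ≤ x := by nlinarith
  have hsin : 3/4 * x ≤ Real.sin x := by
    have h := Real.sin_gt_sub_cube hx0
    linarith
  have hxlb : 3/(2*n) ≤ x := by rw [hx]; gcongr
  have h2x : 2 * x = Real.pi / n := by rw [hx]; field_simp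
  have hcos : Real.cos (Real.pi / n) = 1 - 2 * Real.sin x ^ 2 := by
    rw [← h2x, Real.cos_two_mul, Real.cos_sq']; ring
  have hdir : dirEVZ (k:ℤ) = 4 * Real.sin x ^ 2 := by
    unfold dirEVZ
    have h7 : ((2:ℝ) * ((k:ℤ):ℝ) + 1) = n := by push_cast [hndef]; ring
    rw [h7, hcos]; ring
  rw [hdir]
  have heq : (9:ℝ)/(8*n) = (3/4) * (3/(2*n)) := by ring
  have hslb : 9/(8*n) ≤ Real.sin x := by
    rw [heq]
    calc (3/4) * (3/(2*n)) ≤ 3/4 * x := by linarith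
    _ ≤ Real.sin x := hsin
  have hs0 : (0:ℝ) ≤ Real.sin x := le_trans (by positivity) hslb
  have h4 : 9/8 ≤ n * Real.sin x := by
    have h5 := mul_le_mul_of_nonneg_right hslb hn0.le
    have h6 : 9/(8*n)*n = 9/8 := by field_simp
    rw [h6] at h5; linarith [h5]
  rw [div_le_iff₀ (by positivity : (0:ℝ) < n^2)]
  nlinarith [mul_le_mul h4 h4 (by positivity) (by positivity : (0:ℝ) ≤ n * Real.sin x)]


lemma helpA (b β T v K : ℝ) (hkey : b = 2*v*β*T + K*β^2) (hK : 0 ≤ K)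
    (hβT : 0 ≤ β*T) (huv : Real.sqrt (1/2) ≤ v) : 2*Real.sqrt (1/2)*β*T ≤ b := by
  nlinarith [mul_nonneg (sub_nonneg.2 huv) hβT, mul_nonneg hK (sq_nonneg β)]

lemma helpB (ε S2i d T2 K : ℝ) (hε : 0 < ε) (hS2i : 0 ≤ S2i) (hK : 4 ≤ K)
    (hd : 2/((2*K+1)^2*(2+ε)) ≤ d) (hd0 : 0 < d) (hT2 : K/64 ≤ T2) :
    1/(144*(2+ε)) * S2i * K⁻¹ ≤ 2*S2i*d*T2 := by
  have h2ε : (0:ℝ) < 2+ε := by linarith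
  have hK0 : (0:ℝ) < K := by linarith
  have hgoal2 : 1/(144*(2+ε)) * K⁻¹ ≤ 2*d*T2 := by
    have h1 : 2*(2/((2*K+1)^2*(2+ε)))*(K/64) ≤ 2*d*T2 := by
      have h := mul_le_mul hd hT2 (by positivity) hd0.le
      nlinarith [h]
    refine le_trans ?_ h1
    have hform : 2*(2/((2*K+1)^2*(2+ε)))*(K/64) = K/(16*(2*K+1)^2*(2+ε)) := by
      field_simp; ring
    rw [hform, inv_eq_one_div, div_mul_div_comm, mul_one]
    rw [div_le_div_iff₀ (by positivity) (by positivity)]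
    have h2k1 : (2*K+1)^2 ≤ 9*K^2 := by nlinarith
    nlinarith [mul_pos hK0 hK0]
  calc 1/(144*(2+ε)) * S2i * K⁻¹ = S2i * (1/(144*(2+ε)) * K⁻¹) := by ring
    _ ≤ S2i * (2*d*T2) := mul_le_mul_of_nonneg_left hgoal2 hS2i
    _ = 2*S2i*d*T2 := by ring

set_option maxHeartbeats 4000000 in
/-- lower bound on the mixing coefficient: there is `c > 0` independent of
`k` and `α` such that `b_k ≥ c (Σ_{j∈J} α_j)⁻¹ k⁻¹` for all but finitely many `k`, where
`b_k ∈ (0,1]` is the normalization coefficient of the trial state in the upper bound for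
`λ_0(V_k, α)`. -/
theorem stmt17 (ε : ℝ) (hε : 0 < ε) :
    ∃ c : ℝ, 0 < c ∧
      ∀ (α : ℤ → ℝ) (J : Finset ℤ) (hne : J.Nonempty),
        (∀ j : ℤ, α j ≠ 0 ↔ j ∈ J) → (∀ j ∈ J, 0 < α j) →
        ∀ᶠ k : ℕ in atTop,
          ∀ (rmin rmax : ℤ), rmin = J.min' hne → rmax = J.max' hne →
          ∀ (A B : ℝ), 0 < A → 0 < B →
          ∀ cL cR : ℤ → ℝ,
          (∀ j : ℤ, cL j =
            if -(k : ℤ) ≤ j ∧ j ≤ rmin then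
              (Real.sqrt A)⁻¹ *
                Real.cos (((j : ℝ) + (k : ℝ) + 1/2) * Real.pi / (2 * ((k : ℝ) + (rmin : ℝ)) + 1))
            else 0) →
          (∀ j : ℤ, cR j =
            if rmax ≤ j ∧ j ≤ (k : ℤ) then
              (Real.sqrt B)⁻¹ *
                Real.cos (((k : ℝ) - (j : ℝ) + 1/2) * Real.pi / (2 * ((k : ℝ) - (rmax : ℝ)) + 1))
            else 0) →
          (∑ j ∈ Finset.Icc (-(k : ℤ)) (k : ℤ), cL j ^ 2 = 1/2) →
          (∑ j ∈ Finset.Icc (-(k : ℤ)) (k : ℤ), cR j ^ 2 = 1/2) →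
          ∀ b : ℝ, 0 < b → b ≤ 1 →
          (∑ i : Fin (2*k+1),
            (Real.sqrt (1 - b) * (cL ((i : ℤ) - k) + cR ((i : ℤ) - k)) +
              (Real.sqrt (∑ j ∈ J, α j))⁻¹ * Real.sqrt b *
                Real.sqrt (dirEVZ k / (2 + ε))) ^ 2 = 1) →
          c * (∑ j ∈ J, α j)⁻¹ * (k : ℝ)⁻¹ ≤ b := by
  have h2ε : (0:ℝ) < 2 + ε := by linarith
  refine ⟨1/(144*(2+ε)), div_pos one_pos (by linarith), ?_⟩
  intro α J hne hsupp hpos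
  filter_upwards [Filter.eventually_ge_atTop (2*(J.min' hne).natAbs + 2*(J.max' hne).natAbs + 4)]
    with k hk
  intro rmin rmax hrmin hrmax A B hA hB cL cR hcL hcR hL2 hR2 b hb0 hb1 hnorm
  have hminmax : rmin ≤ rmax := by rw [hrmin, hrmax]; exact J.min'_le _ (J.max'_mem hne)
  have hk' : 2*rmin.natAbs + 2*rmax.natAbs + 4 ≤ k := by rw [hrmin, hrmax]; exact hk
  clear hk hrmin hrmax hsupp
  -- integer facts
  have hp1 : 1 ≤ (k:ℤ) + rmin := by omega
  have hkp : (k:ℤ) ≤ 2*((k:ℤ) + rmin) - 4 := by omega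
  have hq0 : 0 ≤ (k:ℤ) - rmax := by omega
  have hk4 : 4 ≤ k := by omega
  -- real facts
  have hpR : (1:ℝ) ≤ (k:ℝ) + (rmin:ℝ) := by exact_mod_cast hp1
  have hqR : (0:ℝ) ≤ (k:ℝ) - (rmax:ℝ) := by exact_mod_cast hq0
  have hk4R : (4:ℝ) ≤ (k:ℝ) := by exact_mod_cast hk4
  have hkpR : (k:ℝ) ≤ 2*((k:ℝ) + (rmin:ℝ)) - 4 := by exact_mod_cast hkp
  have hDpos : (0:ℝ) < 2 * ((k:ℝ) + (rmin:ℝ)) + 1 := by linarith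
  have hD'pos : (0:ℝ) < 2 * ((k:ℝ) - (rmax:ℝ)) + 1 := by linarith
  -- abbreviations
  obtain ⟨S2, hS2def⟩ : ∃ x, x = ∑ j ∈ J, α j := ⟨_, rfl⟩
  have hS2 : 0 < S2 := by rw [hS2def]; exact Finset.sum_pos (fun j hj => hpos j hj) hne
  obtain ⟨d, hddef⟩ : ∃ x, x = dirEVZ k / (2+ε) := ⟨_, rfl⟩
  have hdlb : 2/((2*(k:ℝ)+1)^2 * (2+ε)) ≤ d := by
    rw [hddef, ← div_div]
    gcongr
    exact dirEVZ_ge k (by omega)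
  have hd0 : 0 < d := lt_of_lt_of_le (by positivity) hdlb
  obtain ⟨β, hβdef⟩ : ∃ x, x = (Real.sqrt S2)⁻¹ * Real.sqrt b * Real.sqrt d := ⟨_, rfl⟩
  have hβ0 : 0 ≤ β := by rw [hβdef]; positivity
  rw [← hS2def] at hnorm ⊢
  rw [← hddef] at hnorm
  rw [← hβdef] at hnorm
  -- reindex the normalization
  have hre := (sum_fin_shift k
    (fun j => (Real.sqrt (1-b) * (cL j + cR j) + β)^2)).symm.trans hnorm
  rw [sum_sq_expand] at hre
  have hsq1b : Real.sqrt (1-b)^2 = 1-b := Real.sq_sqrt (by linarith)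
  have hcardIcc : (((Finset.Icc (-(k:ℤ)) (k:ℤ)).card : ℕ) : ℝ) = 2*(k:ℝ)+1 := by
    have h : (Finset.Icc (-(k:ℤ)) (k:ℤ)).card = 2*k+1 := by
      rw [Int.card_Icc]; omega
    rw [h]; push_cast; ring
  -- cross terms vanish
  have hcross : ∀ j ∈ Finset.Icc (-(k:ℤ)) (k:ℤ), cL j * cR j = 0 := by
    intro j hj
    by_cases h1 : -(k:ℤ) ≤ j ∧ j ≤ rmin
    · by_cases h2 : rmax ≤ j ∧ j ≤ (k:ℤ)
      · have hj1 : j = rmin := by omega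
        rw [hcL j, if_pos h1]
        have hj' : (j:ℝ) = (rmin:ℝ) := by exact_mod_cast hj1
        have harg : ((j : ℝ) + (k : ℝ) + 1/2) * Real.pi / (2 * ((k : ℝ) + (rmin : ℝ)) + 1)
            = Real.pi/2 := by
          rw [hj']; field_simp [hDpos.ne']; ring
        rw [harg, Real.cos_pi_div_two, mul_zero, zero_mul]
      · rw [hcR j, if_neg h2, mul_zero]
    · rw [hcL j, if_neg h1, zero_mul]
  have hLR2 : ∑ j ∈ Finset.Icc (-(k:ℤ)) (k:ℤ), (cL j + cR j)^2 = 1 := by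
    have hexp : ∀ j : ℤ, (cL j + cR j)^2 = cL j^2 + cR j^2 + 2*(cL j * cR j) :=
      fun j => by ring
    simp_rw [hexp]
    rw [Finset.sum_add_distrib, Finset.sum_add_distrib, hL2, hR2]
    have hz : ∑ j ∈ Finset.Icc (-(k:ℤ)) (k:ℤ), 2*(cL j * cR j) = 0 :=
      Finset.sum_eq_zero (fun j hj => by rw [hcross j hj, mul_zero])
    rw [hz]; norm_num
  obtain ⟨T, hTdef⟩ : ∃ x, x = ∑ j ∈ Finset.Icc (-(k:ℤ)) (k:ℤ), (cL j + cR j) := ⟨_, rfl⟩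
  rw [← hTdef, hsq1b, hLR2, hcardIcc] at hre
  have hkey : b = 2*Real.sqrt (1-b)*β*T + (2*(k:ℝ)+1)*β^2 := by linarith
  -- nonnegativity of the profiles
  have hcL0 : ∀ j : ℤ, 0 ≤ cL j := by
    intro j
    rw [hcL j]
    split_ifs with h
    · have hjk : -((k:ℝ)) ≤ (j:ℝ) := by exact_mod_cast h.1
      have hjm : (j:ℝ) ≤ (rmin:ℝ) := by exact_mod_cast h.2
      apply mul_nonneg (by positivity)
      apply Real.cos_nonneg_of_mem_Icc
      rw [Set.mem_Icc]
      constructor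
      · have h0 : 0 ≤ ((j : ℝ) + (k : ℝ) + 1/2) * Real.pi / (2 * ((k : ℝ) + (rmin : ℝ)) + 1) :=
          div_nonneg (mul_nonneg (by linarith) Real.pi_pos.le) hDpos.le
        linarith [Real.pi_pos]
      · rw [div_le_iff₀ hDpos]
        nlinarith [mul_nonneg Real.pi_pos.le (sub_nonneg.2 hjm)]
    · exact le_refl 0
  have hcR0 : ∀ j : ℤ, 0 ≤ cR j := by
    intro j
    rw [hcR j]
    split_ifs with h
    · have hjk : (j:ℝ) ≤ (k:ℝ) := by exact_mod_cast h.2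
      have hjm : (rmax:ℝ) ≤ (j:ℝ) := by exact_mod_cast h.1
      apply mul_nonneg (by positivity)
      apply Real.cos_nonneg_of_mem_Icc
      rw [Set.mem_Icc]
      constructor
      · have h0 : 0 ≤ ((k : ℝ) - (j : ℝ) + 1/2) * Real.pi / (2 * ((k : ℝ) - (rmax : ℝ)) + 1) :=
          div_nonneg (mul_nonneg (by linarith) Real.pi_pos.le) hD'pos.le
        linarith [Real.pi_pos]
      · rw [div_le_iff₀ hD'pos]
        nlinarith [mul_nonneg Real.pi_pos.le (sub_nonneg.2 hjm)]
    · exact le_refl 0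
  have hTnn : 0 ≤ T := by
    rw [hTdef]
    exact Finset.sum_nonneg (fun j _ => add_nonneg (hcL0 j) (hcR0 j))
  have hTge : ∑ j ∈ Finset.Icc (-(k:ℤ)) (k:ℤ), cL j ≤ T := by
    rw [hTdef]
    exact Finset.sum_le_sum (fun j _ => by linarith [hcR0 j])
  -- bound on A
  have hAle : A ≤ 2*((k:ℝ)+(rmin:ℝ)+1) := by
    have hAinv : ((Real.sqrt A)⁻¹)^2 = A⁻¹ := by
      rw [← Real.sqrt_inv, Real.sq_sqrt (by positivity)]
    have hsum_le : (1:ℝ)/2 ≤ ((k:ℝ)+(rmin:ℝ)+1) * A⁻¹ := by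
      rw [← hL2]
      have hbound : ∀ j ∈ Finset.Icc (-(k:ℤ)) (k:ℤ),
          cL j ^ 2 ≤ (if j ∈ Finset.Icc (-(k:ℤ)) rmin then A⁻¹ else 0) := by
        intro j hj
        rw [hcL j]
        split_ifs with h1 h2 h3
        · rw [mul_pow, hAinv]
          nlinarith [Real.cos_sq_le_one
            (((j : ℝ) + (k : ℝ) + 1/2) * Real.pi / (2 * ((k : ℝ) + (rmin : ℝ)) + 1)),
            inv_nonneg.2 hA.le]
        · exact absurd (Finset.mem_Icc.mpr h1) h2
        · rw [zero_pow (by norm_num : (2:ℕ) ≠ 0)]; positivity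
        · rw [zero_pow (by norm_num : (2:ℕ) ≠ 0)]
      calc ∑ j ∈ Finset.Icc (-(k:ℤ)) (k:ℤ), cL j ^ 2
          ≤ ∑ j ∈ Finset.Icc (-(k:ℤ)) (k:ℤ),
              (if j ∈ Finset.Icc (-(k:ℤ)) rmin then A⁻¹ else 0) :=
            Finset.sum_le_sum hbound
        _ = ((k:ℝ)+(rmin:ℝ)+1) * A⁻¹ := by
            rw [Finset.sum_ite_mem,
              Finset.inter_eq_right.mpr (Finset.Icc_subset_Icc le_rfl (by omega)),
              Finset.sum_const, nsmul_eq_mul]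
            congr 1
            have hz : ((Finset.Icc (-(k:ℤ)) rmin).card : ℤ) = (k:ℤ) + rmin + 1 := by
              rw [Int.card_Icc]; omega
            exact_mod_cast hz
    nlinarith [mul_inv_cancel₀ hA.ne', inv_pos.2 hA]
  -- lower bound on the sum of cL
  have hsub2 : Finset.Icc (-(k:ℤ)) (-(k:ℤ) + ((k:ℤ)+rmin)/2) ⊆ Finset.Icc (-(k:ℤ)) (k:ℤ) :=
    Finset.Icc_subset_Icc le_rfl (by omega)
  have hterm : ∀ j ∈ Finset.Icc (-(k:ℤ)) (-(k:ℤ) + ((k:ℤ)+rmin)/2),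
      (Real.sqrt A)⁻¹ * (1/2) ≤ cL j := by
    intro j hj
    rw [Finset.mem_Icc] at hj
    have hcond : -(k:ℤ) ≤ j ∧ j ≤ rmin := ⟨hj.1, by omega⟩
    rw [hcL j, if_pos hcond]
    apply mul_le_mul_of_nonneg_left ?_ (by positivity)
    have hjb : (j:ℝ) + (k:ℝ) ≤ ((k:ℝ)+(rmin:ℝ))/2 := by
      have h1 : (2:ℤ)*(j + (k:ℤ)) ≤ (k:ℤ) + rmin := by omega
      have h2 : (2:ℝ)*((j:ℝ)+(k:ℝ)) ≤ (k:ℝ)+(rmin:ℝ) := by exact_mod_cast h1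
      linarith
    have hθ0 : 0 ≤ ((j : ℝ) + (k : ℝ) + 1/2) * Real.pi / (2 * ((k : ℝ) + (rmin : ℝ)) + 1) := by
      have hjk : -((k:ℝ)) ≤ (j:ℝ) := by exact_mod_cast hcond.1
      exact div_nonneg (mul_nonneg (by linarith) Real.pi_pos.le) hDpos.le
    have hθub : ((j : ℝ) + (k : ℝ) + 1/2) * Real.pi / (2 * ((k : ℝ) + (rmin : ℝ)) + 1)
        ≤ Real.pi/3 := by
      rw [div_le_div_iff₀ hDpos (by norm_num : (0:ℝ) < 3)]
      nlinarith [mul_nonneg Real.pi_pos.le (sub_nonneg.2 hjb),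
        mul_nonneg Real.pi_pos.le (by linarith : (0:ℝ) ≤ (k:ℝ)+(rmin:ℝ) - 1)]
    have hc := Real.cos_le_cos_of_nonneg_of_le_pi hθ0
      (by linarith [Real.pi_pos] : Real.pi/3 ≤ Real.pi) hθub
    rw [Real.cos_pi_div_three] at hc
    exact hc
  have hcard3 : ((k:ℝ)+(rmin:ℝ)+1)/2
      ≤ (((Finset.Icc (-(k:ℤ)) (-(k:ℤ) + ((k:ℤ)+rmin)/2)).card : ℕ) : ℝ) := by
    have hz : (2:ℤ) * ((Finset.Icc (-(k:ℤ)) (-(k:ℤ) + ((k:ℤ)+rmin)/2)).card : ℤ)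
        ≥ (k:ℤ) + rmin + 1 := by
      rw [Int.card_Icc]; omega
    have hzR : ((k:ℝ)+(rmin:ℝ)+1)
        ≤ 2 * (((Finset.Icc (-(k:ℤ)) (-(k:ℤ) + ((k:ℤ)+rmin)/2)).card : ℕ) : ℝ) := by
      exact_mod_cast hz
    linarith
  have hTL : ((k:ℝ)+(rmin:ℝ)+1)/2 * ((Real.sqrt A)⁻¹ * (1/2)) ≤ T := by
    have h0 := Finset.sum_le_sum hterm
    rw [Finset.sum_const, nsmul_eq_mul] at h0
    have h1 : ((k:ℝ)+(rmin:ℝ)+1)/2 * ((Real.sqrt A)⁻¹ * (1/2))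
        ≤ (((Finset.Icc (-(k:ℤ)) (-(k:ℤ) + ((k:ℤ)+rmin)/2)).card : ℕ) : ℝ)
          * ((Real.sqrt A)⁻¹ * (1/2)) :=
      mul_le_mul_of_nonneg_right hcard3 (by positivity)
    have h2 : ∑ j ∈ Finset.Icc (-(k:ℤ)) (-(k:ℤ) + ((k:ℤ)+rmin)/2), cL j
        ≤ ∑ j ∈ Finset.Icc (-(k:ℤ)) (k:ℤ), cL j :=
      Finset.sum_le_sum_of_subset_of_nonneg hsub2 (fun j _ _ => hcL0 j)
    linarith [hTge]
  -- T^2 lower bound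
  have hP1 : (2:ℝ) ≤ (k:ℝ)+(rmin:ℝ)+1 := by linarith
  have hsAle : Real.sqrt A ≤ Real.sqrt (2*((k:ℝ)+(rmin:ℝ)+1)) := Real.sqrt_le_sqrt hAle
  have hsA0 : 0 < Real.sqrt A := Real.sqrt_pos.2 hA
  have hinvA : (Real.sqrt (2*((k:ℝ)+(rmin:ℝ)+1)))⁻¹ ≤ (Real.sqrt A)⁻¹ :=
    inv_anti₀ hsA0 hsAle
  have hT0 : ((k:ℝ)+(rmin:ℝ)+1)/2 * ((Real.sqrt (2*((k:ℝ)+(rmin:ℝ)+1)))⁻¹ * (1/2)) ≤ T := by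
    refine le_trans ?_ hTL
    apply mul_le_mul_of_nonneg_left ?_ (by linarith)
    exact mul_le_mul_of_nonneg_right hinvA (by norm_num)
  have hT0nn : 0 ≤ ((k:ℝ)+(rmin:ℝ)+1)/2 * ((Real.sqrt (2*((k:ℝ)+(rmin:ℝ)+1)))⁻¹ * (1/2)) := by
    positivity
  have hs2P : Real.sqrt (2*((k:ℝ)+(rmin:ℝ)+1)) * Real.sqrt (2*((k:ℝ)+(rmin:ℝ)+1))
      = 2*((k:ℝ)+(rmin:ℝ)+1) := Real.mul_self_sqrt (by linarith)
  have hspos : 0 < Real.sqrt (2*((k:ℝ)+(rmin:ℝ)+1)) := Real.sqrt_pos.2 (by linarith)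
  have hTs : ((k:ℝ)+(rmin:ℝ)+1)/4 ≤ T * Real.sqrt (2*((k:ℝ)+(rmin:ℝ)+1)) := by
    have h := mul_le_mul_of_nonneg_right hT0 hspos.le
    have he : ((k:ℝ)+(rmin:ℝ)+1)/2 * ((Real.sqrt (2*((k:ℝ)+(rmin:ℝ)+1)))⁻¹ * (1/2))
        * Real.sqrt (2*((k:ℝ)+(rmin:ℝ)+1)) = ((k:ℝ)+(rmin:ℝ)+1)/4 := by
      field_simp
      ring
    rw [he] at h
    exact h
  have hT2 : (k:ℝ)/64 ≤ T^2 := by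
    have hq := mul_le_mul hTs hTs (by linarith) (mul_nonneg hTnn hspos.le)
    have he2 : (T * Real.sqrt (2*((k:ℝ)+(rmin:ℝ)+1))) * (T * Real.sqrt (2*((k:ℝ)+(rmin:ℝ)+1)))
        = T^2 * (2*((k:ℝ)+(rmin:ℝ)+1)) := by
      rw [show (T * Real.sqrt (2*((k:ℝ)+(rmin:ℝ)+1))) * (T * Real.sqrt (2*((k:ℝ)+(rmin:ℝ)+1)))
        = T^2 * (Real.sqrt (2*((k:ℝ)+(rmin:ℝ)+1)) * Real.sqrt (2*((k:ℝ)+(rmin:ℝ)+1))) from by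
          ring, hs2P]
    rw [he2] at hq
    have h1 : ((k:ℝ)+(rmin:ℝ)+1)^2/16 ≤ T^2 * (2*((k:ℝ)+(rmin:ℝ)+1)) := by
      calc ((k:ℝ)+(rmin:ℝ)+1)^2/16
          = ((k:ℝ)+(rmin:ℝ)+1)/4 * (((k:ℝ)+(rmin:ℝ)+1)/4) := by ring
        _ ≤ T^2 * (2*((k:ℝ)+(rmin:ℝ)+1)) := hq
    have h2 : ((k:ℝ)+(rmin:ℝ)+1)/32 ≤ T^2 := by
      refine le_of_mul_le_mul_right ?_ (by linarith : (0:ℝ) < 2*((k:ℝ)+(rmin:ℝ)+1))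
      calc ((k:ℝ)+(rmin:ℝ)+1)/32 * (2*((k:ℝ)+(rmin:ℝ)+1))
          = ((k:ℝ)+(rmin:ℝ)+1)^2/16 := by ring
        _ ≤ T^2 * (2*((k:ℝ)+(rmin:ℝ)+1)) := h1
    linarith
  -- value of β^2
  have hβsq : β^2 = S2⁻¹ * b * d := by
    rw [hβdef, mul_pow, mul_pow, inv_pow, Real.sq_sqrt hS2.le, Real.sq_sqrt hb0.le,
      Real.sq_sqrt hd0.le]
  have hkR0 : (0:ℝ) < (k:ℝ) := by linarith
  rcases le_or_gt b (1/2) with hbh | hbh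
  · -- case b ≤ 1/2
    have h12 : Real.sqrt (1/2) ≤ Real.sqrt (1-b) := Real.sqrt_le_sqrt (by linarith)
    have hprod : 0 ≤ β * T := mul_nonneg hβ0 hTnn
    have hstep : 2*Real.sqrt (1/2)*β*T ≤ b :=
      helpA b β T (Real.sqrt (1-b)) (2*(k:ℝ)+1) hkey (by positivity) hprod h12
    have hsb : 0 < Real.sqrt b := Real.sqrt_pos.2 hb0
    have hX : 2*Real.sqrt (1/2)*((Real.sqrt S2)⁻¹*Real.sqrt d*T) ≤ Real.sqrt b := by
      apply le_of_mul_le_mul_right ?_ hsb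
      calc 2*Real.sqrt (1/2)*((Real.sqrt S2)⁻¹*Real.sqrt d*T)*Real.sqrt b
          = 2*Real.sqrt (1/2)*β*T := by rw [hβdef]; ring
        _ ≤ b := hstep
        _ = Real.sqrt b * Real.sqrt b := (Real.mul_self_sqrt hb0.le).symm
    have hXnn : 0 ≤ 2*Real.sqrt (1/2)*((Real.sqrt S2)⁻¹*Real.sqrt d*T) := by
      apply mul_nonneg (by positivity)
      exact mul_nonneg (by positivity) hTnn
    have hfin : (2*Real.sqrt (1/2)*((Real.sqrt S2)⁻¹*Real.sqrt d*T))^2 ≤ b := by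
      have h := pow_le_pow_left₀ hXnn hX 2
      rwa [Real.sq_sqrt hb0.le] at h
    have hval : (2*Real.sqrt (1/2)*((Real.sqrt S2)⁻¹*Real.sqrt d*T))^2 = 2*S2⁻¹*d*T^2 := by
      have e1 : Real.sqrt (1/2)^2 = 1/2 := Real.sq_sqrt (by norm_num)
      have e2 : (Real.sqrt S2)^2 = S2 := Real.sq_sqrt hS2.le
      have e3 : Real.sqrt d^2 = d := Real.sq_sqrt hd0.le
      rw [show (2*Real.sqrt (1/2)*((Real.sqrt S2)⁻¹*Real.sqrt d*T))^2
        = 2^2 * Real.sqrt (1/2)^2 * ((Real.sqrt S2)^2)⁻¹ * Real.sqrt d^2 * T^2 from by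
          ring]
      rw [e1, e2, e3]; ring
    rw [hval] at hfin
    refine le_trans ?_ hfin
    exact helpB ε S2⁻¹ d (T^2) (k:ℝ) hε (inv_nonneg.2 hS2.le) hk4R hdlb hd0 hT2
  · -- case b > 1/2
    have hβT : 0 ≤ 2*Real.sqrt (1-b)*β*T :=
      mul_nonneg (mul_nonneg (by positivity) hβ0) hTnn
    have h2 : (2*(k:ℝ)+1)*β^2 ≤ b := by linarith [hkey]
    rw [hβsq] at h2
    have h3 : (2*(k:ℝ)+1)*S2⁻¹*d ≤ 1 := by
      apply le_of_mul_le_mul_right ?_ hb0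
      calc (2*(k:ℝ)+1)*S2⁻¹*d*b = (2*(k:ℝ)+1)*(S2⁻¹*b*d) := by ring
        _ ≤ b := h2
        _ = 1*b := (one_mul b).symm
    have hDdpos : (0:ℝ) < (2*(k:ℝ)+1)*d := by positivity
    have hS2inv : S2⁻¹ ≤ ((2*(k:ℝ)+1)*d)⁻¹ := by
      rw [inv_eq_one_div ((2*(k:ℝ)+1)*d), le_div_iff₀ hDdpos]
      linarith [h3]
    have hDl : 2/((2*(k:ℝ)+1)*(2+ε)) ≤ (2*(k:ℝ)+1)*d := by
      have h := mul_le_mul_of_nonneg_left hdlb (by positivity : (0:ℝ) ≤ 2*(k:ℝ)+1)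
      have heq2 : (2*(k:ℝ)+1)*(2/((2*(k:ℝ)+1)^2*(2+ε))) = 2/((2*(k:ℝ)+1)*(2+ε)) := by
        field_simp
      rw [heq2] at h
      exact h
    have hinvD : ((2*(k:ℝ)+1)*d)⁻¹ ≤ ((2*(k:ℝ)+1)*(2+ε))/2 := by
      calc ((2*(k:ℝ)+1)*d)⁻¹ ≤ (2/((2*(k:ℝ)+1)*(2+ε)))⁻¹ :=
            inv_anti₀ (by positivity) hDl
        _ = ((2*(k:ℝ)+1)*(2+ε))/2 := by rw [inv_div]
    have hnum : 1/(144*(2+ε)) * (((2*(k:ℝ)+1)*(2+ε))/2) * (k:ℝ)⁻¹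
        = (2*(k:ℝ)+1)/(288*(k:ℝ)) := by
      field_simp; ring
    have hhalf : 1/(144*(2+ε)) * S2⁻¹ * (k:ℝ)⁻¹ ≤ 1/2 := by
      have hc0 : (0:ℝ) ≤ 1/(144*(2+ε)) := by positivity
      have s1 : 1/(144*(2+ε)) * S2⁻¹ * (k:ℝ)⁻¹
          ≤ 1/(144*(2+ε)) * ((2*(k:ℝ)+1)*d)⁻¹ * (k:ℝ)⁻¹ := by
        apply mul_le_mul_of_nonneg_right ?_ (by positivity)
        exact mul_le_mul_of_nonneg_left hS2inv hc0
      have s2 : 1/(144*(2+ε)) * ((2*(k:ℝ)+1)*d)⁻¹ * (k:ℝ)⁻¹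
          ≤ 1/(144*(2+ε)) * (((2*(k:ℝ)+1)*(2+ε))/2) * (k:ℝ)⁻¹ := by
        apply mul_le_mul_of_nonneg_right ?_ (by positivity)
        exact mul_le_mul_of_nonneg_left hinvD hc0
      have s3 : (2*(k:ℝ)+1)/(288*(k:ℝ)) ≤ 1/2 := by
        rw [div_le_div_iff₀ (by positivity) (by norm_num : (0:ℝ) < 2)]
        linarith
      rw [hnum] at s2
      linarith
    linarith
end

section
/- Sharp cubic decay of the spectral gap for a single-site potential (Corollary 4.3, proving the conjecture of Kim–Yoo): for H_{k,α} = L_k + α δ_0 with any α > 0, there exist constants c_1, c_2 > 0 independent of k and α such that c_1/α ≤ |V_k|³ · Γ(V_k, α) ≤ c_2/α for all but finitely many k. -/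
open Finset Filter Topology Matrix

namespace Stmt19

/-- extension of a vector on `Fin n` to `ℕ` by zero -/
noncomputable def ext {n : ℕ} (f : Fin n → ℝ) : ℕ → ℝ :=
  fun j => if h : j < n then f ⟨j, h⟩ else 0

lemma ext_apply {n : ℕ} (f : Fin n → ℝ) (i : Fin n) : ext f i.val = f i := by
  simp [ext]

lemma pathLap_decomp (n : ℕ) (i j : Fin n) :
    pathLap n i j = (if j = i then (if i.val = 0 ∨ i.val = n - 1 then (1:ℝ) else 2) else 0)
      + (if j.val = i.val + 1 then (-1:ℝ) else 0)
      + (if j.val + 1 = i.val then (-1:ℝ) else 0) := by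
  unfold pathLap
  simp only [Matrix.of_apply]
  rcases eq_or_ne i j with h | h
  · subst h
    rw [if_pos (rfl : i = i), if_neg (show ¬(i.val = i.val + 1) by omega),
      if_neg (show ¬(i.val + 1 = i.val) by omega)]
    simp
  · rw [if_neg h, if_neg (Ne.symm h)]
    by_cases h1 : i.val + 1 = j.val
    · rw [if_pos (Or.inl h1), if_pos (show j.val = i.val + 1 by omega),
        if_neg (show ¬(j.val + 1 = i.val) by omega)]
      ring
    · by_cases h2 : j.val + 1 = i.val
      · rw [if_pos (Or.inr h2), if_neg (show ¬(j.val = i.val + 1) by omega), if_pos h2]; ring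
      · rw [if_neg (show ¬(i.val + 1 = j.val ∨ j.val + 1 = i.val) by tauto),
          if_neg (show ¬(j.val = i.val + 1) by omega), if_neg h2]
        ring

lemma pathLap_mulVec {n : ℕ} (f : Fin n → ℝ) (i : Fin n) :
    (pathLap n).mulVec f i =
      (if i.val = 0 ∨ i.val = n - 1 then 1 else 2) * f i
        - ext f (i.val + 1) - (if 0 < i.val then ext f (i.val - 1) else 0) := by
  unfold Matrix.mulVec dotProduct
  simp only [pathLap_decomp n i, add_mul, Finset.sum_add_distrib]
  have h1 : ∑ j : Fin n, (if j = i then (if i.val = 0 ∨ i.val = n - 1 then (1:ℝ) else 2) else 0) * f j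
      = (if i.val = 0 ∨ i.val = n - 1 then 1 else 2) * f i := by
    have hc : ∀ j : Fin n,
        (if j = i then (if i.val = 0 ∨ i.val = n - 1 then (1:ℝ) else 2) else 0) * f j
          = if j = i then (if i.val = 0 ∨ i.val = n - 1 then (1:ℝ) else 2) * f j else 0 := by
      intro j; split_ifs <;> ring
    simp_rw [hc]
    rw [Finset.sum_ite_eq' Finset.univ i (fun j => (if i.val = 0 ∨ i.val = n - 1 then (1:ℝ) else 2) * f j)]
    simp
  have h2 : ∑ j : Fin n, (if j.val = i.val + 1 then (-1:ℝ) else 0) * f j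
      = - ext f (i.val + 1) := by
    by_cases h : i.val + 1 < n
    · have he : ∀ j : Fin n, (j.val = i.val + 1) ↔ (j = ⟨i.val + 1, h⟩) := by
        intro j; rw [Fin.ext_iff]
      simp_rw [he]
      simp only [ite_mul, zero_mul]
      rw [Finset.sum_ite_eq' Finset.univ (⟨i.val + 1, h⟩ : Fin n) (fun j => (-1:ℝ) * f j)]
      simp [ext, h]
    · have he : ∀ j : Fin n, ¬ (j.val = i.val + 1) := by
        intro j hj; exact h (hj ▸ j.isLt)
      simp only [he, if_false, zero_mul, Finset.sum_const_zero]
      simp [ext, h]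
  have h3 : ∑ j : Fin n, (if j.val + 1 = i.val then (-1:ℝ) else 0) * f j
      = - (if 0 < i.val then ext f (i.val - 1) else 0) := by
    by_cases h : 0 < i.val
    · have hlt : i.val - 1 < n := by omega
      have he : ∀ j : Fin n, (j.val + 1 = i.val) ↔ (j = ⟨i.val - 1, hlt⟩) := by
        intro j; rw [Fin.ext_iff]; constructor <;> intro hh <;> simp at hh ⊢ <;> omega
      simp_rw [he]
      simp only [ite_mul, zero_mul]
      rw [Finset.sum_ite_eq' Finset.univ (⟨i.val - 1, hlt⟩ : Fin n) (fun j => (-1:ℝ) * f j)]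
      simp [ext, hlt, h]
    · have he : ∀ j : Fin n, ¬ (j.val + 1 = i.val) := by intro j hj; omega
      simp only [he, if_false, zero_mul, Finset.sum_const_zero]
      simp [h]
  rw [h1, h2, h3]; ring

lemma single0_cast (k : ℕ) (α : ℝ) (i : Fin (2*k+1)) :
    single0 α ((i : ℤ) - k) = if i.val = k then α else 0 := by
  unfold single0
  split_ifs with h1 h2 h2 <;> first | rfl | (exfalso; omega)

lemma hmat_mulVec (k : ℕ) (α : ℝ) (f : Fin (2*k+1) → ℝ) (i : Fin (2*k+1)) :
    (Hmat k (single0 α)).mulVec f i =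
      (if i.val = 0 ∨ i.val = 2*k then 1 else 2) * f i
        + (if i.val = k then α else 0) * f i
        - ext f (i.val + 1) - (if 0 < i.val then ext f (i.val - 1) else 0) := by
  unfold Hmat
  rw [Matrix.add_mulVec, Pi.add_apply, pathLap_mulVec]
  unfold potMat
  rw [Matrix.mulVec_diagonal, single0_cast]
  have h : 2*k+1-1 = 2*k := by omega
  rw [h]; ring

end Stmt19
namespace Stmt19

lemma ext_out {n : ℕ} (f : Fin n → ℝ) {j : ℕ} (hj : ¬ j < n) : ext f j = 0 := by
  simp [ext, hj]

lemma eig_eq {k : ℕ} {α μ : ℝ} {f : Fin (2*k+1) → ℝ}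
    (hf : (Hmat k (single0 α)).mulVec f = μ • f) (j : ℕ) (hj : j < 2*k+1) :
    (if j = 0 ∨ j = 2*k then 1 else 2) * ext f j + (if j = k then α else 0) * ext f j
      - ext f (j+1) - (if 0 < j then ext f (j-1) else 0) = μ * ext f j := by
  have h := congrFun hf ⟨j, hj⟩
  rw [hmat_mulVec] at h
  have he : ext f j = f ⟨j, hj⟩ := by simp [ext, hj]
  rw [he]
  simpa using h

lemma mu_pos {k : ℕ} {α μ : ℝ} {f : Fin (2*k+1) → ℝ} (hk : 1 ≤ k) (hα : 0 < α)
    (hf0 : f ≠ 0) (hf : (Hmat k (single0 α)).mulVec f = μ • f) : 0 < μ := by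
  set u := ext f with hu
  set S := ∑ j ∈ Finset.range (2*k+1), u j ^ 2 with hS
  set T := ∑ j ∈ Finset.range (2*k), u j * u (j+1) with hT
  set Q := ∑ j ∈ Finset.range (2*k), (u (j+1) - u j) ^ 2 with hQ
  have hA : ∑ j ∈ Finset.range (2*k+1), (if j = 0 ∨ j = 2*k then (1:ℝ) else 2) * u j ^ 2
      = 2*S - u 0 ^ 2 - u (2*k) ^ 2 := by
    have hpt : ∀ j ∈ Finset.range (2*k+1), (if j = 0 ∨ j = 2*k then (1:ℝ) else 2) * u j ^ 2
        = 2 * u j ^2 - (if j = 0 then u j ^2 else 0) - (if j = 2*k then u j ^2 else 0) := by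
      intro j _; split_ifs <;> first | ring1 | (exfalso; omega)
    rw [Finset.sum_congr rfl hpt]
    rw [Finset.sum_sub_distrib, Finset.sum_sub_distrib,
      Finset.sum_ite_eq' (Finset.range (2*k+1)) 0 (fun j => u j ^2),
      Finset.sum_ite_eq' (Finset.range (2*k+1)) (2*k) (fun j => u j ^2), ← Finset.mul_sum]
    rw [if_pos (by simp), if_pos (by simp)]
  have hB : ∑ j ∈ Finset.range (2*k+1), (if j = k then α else 0) * u j ^ 2 = α * u k ^ 2 := by
    have hpt : ∀ j ∈ Finset.range (2*k+1), (if j = k then α else 0) * u j ^ 2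
        = (if j = k then α * u j ^2 else 0) := by
      intro j _; split_ifs <;> ring
    rw [Finset.sum_congr rfl hpt,
      Finset.sum_ite_eq' (Finset.range (2*k+1)) k (fun j => α * u j ^2)]
    rw [if_pos (by simp; omega)]
  have hC : ∑ j ∈ Finset.range (2*k+1), u j * u (j+1) = T := by
    rw [Finset.sum_range_succ, hT]
    have h0 : u (2*k+1) = 0 := ext_out f (by omega)
    rw [h0]; ring
  have hD : (∑ j ∈ Finset.range (2*k+1), u j * if 0 < j then u (j-1) else 0) = T := by
    rw [Finset.sum_range_succ']
    simp only [Nat.succ_sub_one, Nat.zero_lt_succ, if_pos, lt_irrefl, if_neg, Nat.add_sub_cancel]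
    rw [hT]
    simp [mul_comm]
  have hQS : Q = 2*S - u 0 ^2 - u (2*k) ^2 - 2*T := by
    have e1 : ∑ j ∈ Finset.range (2*k), u (j+1) ^ 2 = S - u 0 ^2 := by
      have h' := Finset.sum_range_succ' (fun j => u j ^ 2) (2*k)
      rw [hS, h']; ring
    have e2 : ∑ j ∈ Finset.range (2*k), u j ^ 2 = S - u (2*k) ^2 := by
      have h' := Finset.sum_range_succ (fun j => u j ^ 2) (2*k)
      rw [hS, h']; ring
    have hpt : ∀ j ∈ Finset.range (2*k), (u (j+1) - u j)^2
        = u (j+1)^2 + u j ^2 - 2 * (u j * u (j+1)) := by intro j _; ring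
    rw [hQ, Finset.sum_congr rfl hpt, Finset.sum_sub_distrib, Finset.sum_add_distrib,
      e1, e2, ← Finset.mul_sum, ← hT]
    ring
  have main : μ * S = Q + α * u k ^ 2 := by
    have h1 : μ * S = ∑ j ∈ Finset.range (2*k+1), μ * u j ^ 2 := by
      rw [hS, Finset.mul_sum]
    have h2 : ∀ j ∈ Finset.range (2*k+1), μ * u j ^ 2
        = (if j = 0 ∨ j = 2*k then (1:ℝ) else 2) * u j ^2 + (if j = k then α else 0) * u j ^2
          - u j * u (j+1) - u j * (if 0 < j then u (j-1) else 0) := by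
      intro j hj
      have h3 := eig_eq hf j (by simpa using hj)
      rw [← hu] at h3
      split_ifs at h3 ⊢ <;> linear_combination (u j) * h3.symm
    rw [h1, Finset.sum_congr rfl h2, Finset.sum_sub_distrib, Finset.sum_sub_distrib,
      Finset.sum_add_distrib, hA, hB, hC, hD, hQS]
    ring
  have hSpos : 0 < S := by
    obtain ⟨i, hi⟩ := Function.ne_iff.mp hf0
    have h1 : u i.val = f i := ext_apply f i
    have h2 : 0 < u i.val ^ 2 := by
      have hne : u i.val ≠ 0 := by rw [h1]; simpa using hi
      exact lt_of_le_of_ne (sq_nonneg _) (Ne.symm (pow_ne_zero 2 hne))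
    have h3 : u i.val ^2 ≤ S := by
      apply Finset.single_le_sum (fun j _ => sq_nonneg (u j))
      simp [i.isLt]
    linarith
  have hQ0 : 0 ≤ Q := Finset.sum_nonneg (fun j _ => sq_nonneg _)
  have hk0 : 0 ≤ α * u k ^2 := by positivity
  have hμ0 : 0 ≤ μ := by nlinarith
  rcases lt_or_eq_of_le hμ0 with h | h
  · exact h
  exfalso
  have hzero : Q + α * u k ^2 = 0 := by rw [← main, ← h]; ring
  have hQz : Q = 0 := by linarith
  have hukz : u k = 0 := by
    have h4 : α * u k ^2 = 0 := by linarith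
    rcases mul_eq_zero.mp h4 with h' | h'
    · exact absurd h' (ne_of_gt hα)
    · exact pow_eq_zero_iff (two_ne_zero) |>.mp h'
  have hstep : ∀ j ∈ Finset.range (2*k), (u (j+1) - u j)^2 = 0 := by
    rw [hQ] at hQz
    exact (Finset.sum_eq_zero_iff_of_nonneg (fun j _ => sq_nonneg _)).mp hQz
  have hconst : ∀ j, j ≤ 2*k → u j = u 0 := by
    intro j
    induction j with
    | zero => intro _; rfl
    | succ m ih =>
      intro hm
      have h1 := hstep m (by simp; omega)
      have h2 : u (m+1) = u m := by
        have h5 := pow_eq_zero_iff (two_ne_zero) |>.mp h1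
        linarith [sub_eq_zero.mp h5]
      rw [h2, ih (by omega)]
  apply hf0
  funext i
  rw [Pi.zero_apply, ← ext_apply f i, ← hu,
    hconst i.val (by have := i.isLt; omega)]
  rw [← hconst k (by omega)]
  exact hukz

end Stmt19
namespace Stmt19

open Real

/-- `θ_k = π/(2k+1)` -/
noncomputable def th (k : ℕ) : ℝ := Real.pi / (2*(k:ℝ)+1)

lemma th_pos (k : ℕ) : 0 < th k := by
  unfold th; positivity

lemma th_mul (k : ℕ) : (2*(k:ℝ)+1) * th k = Real.pi := by
  unfold th; field_simp

lemma th_le (k : ℕ) (hk : 2 ≤ k) : th k ≤ Real.pi / 5 := by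
  unfold th
  have hπ := Real.pi_pos
  have h5 : (5:ℝ) ≤ 2*(k:ℝ)+1 := by
    have : (2:ℝ) ≤ (k:ℝ) := by exact_mod_cast hk
    linarith
  rw [div_le_div_iff₀ (by linarith) (by norm_num)]
  nlinarith

/-- the antisymmetric eigenvector `sin(θ (i-k))` -/
noncomputable def aVec (k : ℕ) : Fin (2*k+1) → ℝ :=
  fun i => Real.sin (th k * ((i.val:ℝ) - k))

lemma aVec_ext {k : ℕ} {j : ℕ} (hj : j < 2*k+1) :
    ext (aVec k) j = Real.sin (th k * ((j:ℝ) - k)) := by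
  simp [ext, hj, aVec]

/-- the symmetric vector `cos(φ (k + 1/2 - |i-k|))` -/
noncomputable def sVec (k : ℕ) (φ : ℝ) : Fin (2*k+1) → ℝ :=
  fun i => Real.cos (φ * ((k:ℝ) + 1/2 - |(i.val:ℝ) - k|))

lemma sVec_ext {k : ℕ} (φ : ℝ) {j : ℕ} (hj : j < 2*k+1) :
    ext (sVec k φ) j = Real.cos (φ * ((k:ℝ) + 1/2 - |(j:ℝ) - k|)) := by
  simp [ext, hj, sVec]

lemma aVec_eig (k : ℕ) (hk : 2 ≤ k) (α : ℝ) :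
    (Hmat k (single0 α)).mulVec (aVec k) = (2 - 2*Real.cos (th k)) • (aVec k) := by
  have hθ := th_mul k
  set θ := th k with hθdef
  have hrel : Real.sin ((k:ℝ)*θ) * Real.cos θ + Real.cos ((k:ℝ)*θ) * Real.sin θ
      = Real.sin ((k:ℝ)*θ) := by
    have h1 : (k:ℝ)*θ + θ = Real.pi - (k:ℝ)*θ := by nlinarith [hθ]
    have h2 := Real.sin_pi_sub ((k:ℝ)*θ)
    rw [← Real.sin_add, h1, h2]
  funext i
  rw [hmat_mulVec, Pi.smul_apply, smul_eq_mul]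
  have hiv := i.isLt
  by_cases h0 : i.val = 0
  · have hv : ((i.val:ℕ):ℝ) = 0 := by rw [h0]; norm_num
    rw [if_pos (Or.inl h0), if_neg (show ¬(i.val = k) by omega),
      if_neg (show ¬(0 < i.val) by omega), show i.val + 1 = 1 by omega,
      aVec_ext (show 1 < 2*k+1 by omega)]
    show (1:ℝ) * aVec k i + 0 * aVec k i - Real.sin (θ * (((1:ℕ):ℝ) - k)) - 0 = _
    simp only [aVec, hv]
    rw [show θ * ((0:ℝ) - k) = -((k:ℝ)*θ) by ring, Real.sin_neg,
      show θ * (((1:ℕ):ℝ) - k) = θ - (k:ℝ)*θ by push_cast; ring, Real.sin_sub]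
    linear_combination (-1 : ℝ) * hrel
  · by_cases h2k : i.val = 2*k
    · have hv : ((i.val:ℕ):ℝ) = 2*(k:ℝ) := by rw [h2k]; push_cast; ring
      rw [if_pos (Or.inr h2k), if_neg (show ¬(i.val = k) by omega),
        if_pos (show 0 < i.val by omega),
        ext_out _ (show ¬(i.val + 1 < 2*k+1) by omega),
        show i.val - 1 = 2*k-1 by omega, aVec_ext (show 2*k-1 < 2*k+1 by omega)]
      simp only [aVec, hv]
      rw [show θ * (2*(k:ℝ) - k) = (k:ℝ)*θ by ring,
        show θ * (((2*k-1:ℕ):ℝ) - k) = (k:ℝ)*θ - θ by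
          rw [Nat.cast_sub (by omega)]; push_cast; ring,
        Real.sin_sub]
      linear_combination hrel
    · -- interior
      rw [if_neg (show ¬(i.val = 0 ∨ i.val = 2*k) by omega),
        if_pos (show 0 < i.val by omega),
        aVec_ext (show i.val + 1 < 2*k+1 by omega),
        aVec_ext (show i.val - 1 < 2*k+1 by omega)]
      have hpot : (if i.val = k then α else 0) * aVec k i = 0 := by
        split_ifs with h
        · have hz : th k * (((i.val:ℕ):ℝ) - k) = 0 := by
            rw [h]; ring
          simp [aVec, hz]
        · ring
      rw [hpot]
      simp only [aVec]
      rw [show ((i.val + 1 : ℕ):ℝ) = ((i.val:ℕ):ℝ) + 1 by push_cast; ring,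
        show ((i.val - 1 : ℕ):ℝ) = ((i.val:ℕ):ℝ) - 1 by
          rw [Nat.cast_sub (by omega)]; norm_num]
      rw [show θ * (((i.val:ℕ):ℝ) + 1 - k) = θ * (((i.val:ℕ):ℝ) - k) + θ by ring,
        show θ * (((i.val:ℕ):ℝ) - 1 - k) = θ * (((i.val:ℕ):ℝ) - k) - θ by ring,
        Real.sin_add, Real.sin_sub]
      ring

lemma aVec_ne (k : ℕ) (hk : 2 ≤ k) : aVec k ≠ 0 := by
  intro h
  have h1 := congrFun h ⟨k+1, by omega⟩
  have hv : th k * ((((k+1:ℕ)):ℝ) - k) = th k := by push_cast; ring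
  simp only [aVec, Pi.zero_apply] at h1
  rw [show (((⟨k+1, by omega⟩ : Fin (2*k+1)).val:ℕ):ℝ) = ((k+1:ℕ):ℝ) from rfl, hv] at h1
  have : 0 < Real.sin (th k) := Real.sin_pos_of_pos_of_lt_pi (th_pos k) (by
    have := th_le k hk
    have := Real.pi_pos
    linarith)
  linarith [h1]

lemma sVec_eig (k : ℕ) (hk : 2 ≤ k) (α φ : ℝ)
    (hroot : 2*Real.sin φ * Real.sin ((2*(k:ℝ)+1)*φ/2) = α * Real.cos ((2*(k:ℝ)+1)*φ/2)) :
    (Hmat k (single0 α)).mulVec (sVec k φ) = (2 - 2*Real.cos φ) • (sVec k φ) := by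
  have hs2 : Real.sin φ = 2 * Real.sin (φ/2) * Real.cos (φ/2) := by
    have h := Real.sin_two_mul (φ/2)
    rw [show 2*(φ/2) = φ by ring] at h
    linarith
  have hc2 : Real.cos φ = 1 - 2 * Real.sin (φ/2)^2 := by
    have h := Real.cos_two_mul (φ/2)
    rw [show 2*(φ/2) = φ by ring] at h
    linear_combination h + 2 * Real.sin_sq_add_cos_sq (φ/2)
  funext i
  rw [hmat_mulVec, Pi.smul_apply, smul_eq_mul]
  have hiv := i.isLt
  have hkR : (2:ℝ) ≤ (k:ℝ) := by exact_mod_cast hk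
  by_cases h0 : i.val = 0
  · have hv : ((i.val:ℕ):ℝ) = 0 := by rw [h0]; norm_num
    rw [if_pos (Or.inl h0), if_neg (show ¬(i.val = k) by omega),
      if_neg (show ¬(0 < i.val) by omega), show i.val + 1 = 1 by omega,
      sVec_ext φ (show 1 < 2*k+1 by omega)]
    simp only [sVec, hv]
    rw [show |(0:ℝ) - (k:ℝ)| = (k:ℝ) by rw [abs_of_nonpos (by linarith)]; ring,
      show |((1:ℕ):ℝ) - (k:ℝ)| = (k:ℝ) - 1 by
        push_cast; rw [abs_of_nonpos (by linarith)]; ring]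
    rw [show φ * ((k:ℝ) + 1/2 - k) = φ/2 by ring,
      show φ * ((k:ℝ) + 1/2 - ((k:ℝ)-1)) = φ/2 + φ by ring, Real.cos_add]
    linear_combination (Real.sin (φ/2)) * hs2 + (Real.cos (φ/2)) * hc2
  · by_cases h2k : i.val = 2*k
    · have hv : ((i.val:ℕ):ℝ) = 2*(k:ℝ) := by rw [h2k]; push_cast; ring
      rw [if_pos (Or.inr h2k), if_neg (show ¬(i.val = k) by omega),
        if_pos (show 0 < i.val by omega),
        ext_out _ (show ¬(i.val + 1 < 2*k+1) by omega),
        show i.val - 1 = 2*k-1 by omega, sVec_ext φ (show 2*k-1 < 2*k+1 by omega)]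
      simp only [sVec, hv]
      rw [show |2*(k:ℝ) - (k:ℝ)| = (k:ℝ) by rw [abs_of_nonneg (by linarith)]; ring,
        show |((2*k-1:ℕ):ℝ) - (k:ℝ)| = (k:ℝ) - 1 by
          rw [Nat.cast_sub (by omega)]; push_cast; rw [abs_of_nonneg (by linarith)]; ring]
      rw [show φ * ((k:ℝ) + 1/2 - k) = φ/2 by ring,
        show φ * ((k:ℝ) + 1/2 - ((k:ℝ)-1)) = φ/2 + φ by ring, Real.cos_add]
      linear_combination (Real.sin (φ/2)) * hs2 + (Real.cos (φ/2)) * hc2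
    · by_cases hc : i.val = k
      · -- center
        have hv : ((i.val:ℕ):ℝ) = (k:ℝ) := by rw [hc]
        rw [if_neg (show ¬(i.val = 0 ∨ i.val = 2*k) by omega), if_pos hc,
          if_pos (show 0 < i.val by omega),
          sVec_ext φ (show i.val + 1 < 2*k+1 by omega),
          sVec_ext φ (show i.val - 1 < 2*k+1 by omega),
          show i.val + 1 = k+1 by omega, show i.val - 1 = k-1 by omega]
        simp only [sVec, hv]
        rw [show |(k:ℝ) - (k:ℝ)| = 0 by simp,
          show |((k+1:ℕ):ℝ) - (k:ℝ)| = 1 by push_cast; rw [abs_of_nonneg (by linarith)]; ring,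
          show |((k-1:ℕ):ℝ) - (k:ℝ)| = 1 by
            rw [Nat.cast_sub (by omega)]; push_cast; rw [abs_of_nonpos (by linarith)]; ring]
        rw [show φ * ((k:ℝ) + 1/2 - 0) = φ * ((k:ℝ)+1/2) by ring,
          show φ * ((k:ℝ) + 1/2 - 1) = φ * ((k:ℝ)+1/2) - φ by ring, Real.cos_sub]
        rw [show (2*(k:ℝ)+1)*φ/2 = φ * ((k:ℝ)+1/2) by ring] at hroot
        linear_combination (-1:ℝ) * hroot
      · rcases Nat.lt_or_ge i.val k with hlt | hge
        · -- left interior: 0 < i < k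
          rw [if_neg (show ¬(i.val = 0 ∨ i.val = 2*k) by omega), if_neg hc,
            if_pos (show 0 < i.val by omega),
            sVec_ext φ (show i.val + 1 < 2*k+1 by omega),
            sVec_ext φ (show i.val - 1 < 2*k+1 by omega)]
          have hcast1 : ((i.val + 1 : ℕ):ℝ) = ((i.val:ℕ):ℝ) + 1 := by push_cast; ring
          have hcast2 : ((i.val - 1 : ℕ):ℝ) = ((i.val:ℕ):ℝ) - 1 := by
            rw [Nat.cast_sub (by omega)]; norm_num
          have hxk : ((i.val:ℕ):ℝ) ≤ (k:ℝ) - 1 := by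
            have : (i.val:ℕ) + 1 ≤ k := by omega
            have := (Nat.cast_le (α := ℝ)).mpr this
            push_cast at this; linarith
          simp only [sVec]
          rw [hcast1, hcast2,
            show |((i.val:ℕ):ℝ) - (k:ℝ)| = (k:ℝ) - ((i.val:ℕ):ℝ) by
              rw [abs_of_nonpos (by linarith)]; ring,
            show |((i.val:ℕ):ℝ) + 1 - (k:ℝ)| = (k:ℝ) - ((i.val:ℕ):ℝ) - 1 by
              rw [abs_of_nonpos (by linarith)]; ring,
            show |((i.val:ℕ):ℝ) - 1 - (k:ℝ)| = (k:ℝ) - ((i.val:ℕ):ℝ) + 1 by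
              rw [abs_of_nonpos (by linarith)]; ring]
          rw [show φ * ((k:ℝ) + 1/2 - ((k:ℝ) - ((i.val:ℕ):ℝ) - 1))
                = φ * ((k:ℝ) + 1/2 - ((k:ℝ) - ((i.val:ℕ):ℝ))) + φ by ring,
            show φ * ((k:ℝ) + 1/2 - ((k:ℝ) - ((i.val:ℕ):ℝ) + 1))
                = φ * ((k:ℝ) + 1/2 - ((k:ℝ) - ((i.val:ℕ):ℝ))) - φ by ring,
            Real.cos_add, Real.cos_sub]
          ring
        · -- right interior: k < i < 2k
          have hgt : k < i.val := by omega
          rw [if_neg (show ¬(i.val = 0 ∨ i.val = 2*k) by omega), if_neg hc,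
            if_pos (show 0 < i.val by omega),
            sVec_ext φ (show i.val + 1 < 2*k+1 by omega),
            sVec_ext φ (show i.val - 1 < 2*k+1 by omega)]
          have hcast1 : ((i.val + 1 : ℕ):ℝ) = ((i.val:ℕ):ℝ) + 1 := by push_cast; ring
          have hcast2 : ((i.val - 1 : ℕ):ℝ) = ((i.val:ℕ):ℝ) - 1 := by
            rw [Nat.cast_sub (by omega)]; norm_num
          have hxk : (k:ℝ) + 1 ≤ ((i.val:ℕ):ℝ) := by
            have : k + 1 ≤ (i.val:ℕ) := by omega
            have := (Nat.cast_le (α := ℝ)).mpr this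
            push_cast at this; linarith
          simp only [sVec]
          rw [hcast1, hcast2,
            show |((i.val:ℕ):ℝ) - (k:ℝ)| = ((i.val:ℕ):ℝ) - (k:ℝ) by
              rw [abs_of_nonneg (by linarith)],
            show |((i.val:ℕ):ℝ) + 1 - (k:ℝ)| = ((i.val:ℕ):ℝ) - (k:ℝ) + 1 by
              rw [abs_of_nonneg (by linarith)]; ring,
            show |((i.val:ℕ):ℝ) - 1 - (k:ℝ)| = ((i.val:ℕ):ℝ) - (k:ℝ) - 1 by
              rw [abs_of_nonneg (by linarith)]; ring]
          rw [show φ * ((k:ℝ) + 1/2 - (((i.val:ℕ):ℝ) - (k:ℝ) + 1))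
                = φ * ((k:ℝ) + 1/2 - (((i.val:ℕ):ℝ) - (k:ℝ))) - φ by ring,
            show φ * ((k:ℝ) + 1/2 - (((i.val:ℕ):ℝ) - (k:ℝ) - 1))
                = φ * ((k:ℝ) + 1/2 - (((i.val:ℕ):ℝ) - (k:ℝ))) + φ by ring,
            Real.cos_add, Real.cos_sub]
          ring

lemma sVec_ne (k : ℕ) (hk : 2 ≤ k) {φ : ℝ} (hφ0 : 0 < φ) (hφθ : φ < th k) :
    sVec k φ ≠ 0 := by
  intro h
  have h1 := congrFun h ⟨k, by omega⟩
  simp only [sVec, Pi.zero_apply] at h1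
  rw [show |(((⟨k, by omega⟩ : Fin (2*k+1)).val:ℕ):ℝ) - (k:ℝ)| = 0 by simp] at h1
  have harg : 0 < φ * ((k:ℝ) + 1/2 - 0) := by
    have : (0:ℝ) ≤ k := Nat.cast_nonneg k
    nlinarith
  have harg2 : φ * ((k:ℝ) + 1/2 - 0) < Real.pi/2 := by
    have := th_mul k
    nlinarith [th_pos k]
  have : 0 < Real.cos (φ * ((k:ℝ) + 1/2 - 0)) :=
    Real.cos_pos_of_mem_Ioo ⟨by linarith [Real.pi_pos], harg2⟩
  linarith [h1]

end Stmt19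
namespace Stmt19

open Real

lemma rev_val {k : ℕ} (i : Fin (2*k+1)) : (Fin.rev i).val = 2*k - i.val := by
  rw [Fin.val_rev]; omega

lemma mulVec_rev (k : ℕ) (α : ℝ) (f : Fin (2*k+1) → ℝ) :
    (Hmat k (single0 α)).mulVec (fun i => f i.rev)
      = fun i => ((Hmat k (single0 α)).mulVec f) i.rev := by
  funext i
  rw [hmat_mulVec, hmat_mulVec]
  have hiv := i.isLt
  have hr := rev_val i
  have e1 : (if i.val = 0 ∨ i.val = 2*k then (1:ℝ) else 2)
      = (if (Fin.rev i).val = 0 ∨ (Fin.rev i).val = 2*k then (1:ℝ) else 2) := by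
    by_cases h : i.val = 0 ∨ i.val = 2*k
    · rw [if_pos h, if_pos (by omega)]
    · rw [if_neg h, if_neg (by omega)]
  have e2 : (if i.val = k then α else 0) = (if (Fin.rev i).val = k then α else 0) := by
    by_cases h : i.val = k
    · rw [if_pos h, if_pos (by omega)]
    · rw [if_neg h, if_neg (by omega)]
  have e3 : ext (fun i => f i.rev) (i.val + 1)
      = (if 0 < (Fin.rev i).val then ext f ((Fin.rev i).val - 1) else 0) := by
    by_cases h : i.val + 1 < 2*k+1
    · rw [if_pos (by omega)]
      have : ext (fun i => f i.rev) (i.val+1) = f (Fin.rev (⟨i.val+1, h⟩ : Fin (2*k+1))) := by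
        simp [ext, h]
      rw [this, ← ext_apply f, rev_val]
      congr 1
      simp only [Fin.val_mk]
      omega
    · rw [if_neg (by omega), ext_out _ h]
  have e4 : (if 0 < i.val then ext (fun i => f i.rev) (i.val - 1) else 0)
      = ext f ((Fin.rev i).val + 1) := by
    by_cases h : 0 < i.val
    · rw [if_pos h]
      have hlt : i.val - 1 < 2*k+1 := by omega
      have : ext (fun i => f i.rev) (i.val-1) = f (Fin.rev (⟨i.val-1, hlt⟩ : Fin (2*k+1))) := by
        simp [ext, hlt]
      rw [this, ← ext_apply f, rev_val]
      congr 1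
      simp only [Fin.val_mk]
      omega
    · rw [if_neg h, ext_out _ (by omega)]
  rw [e1, e2, e3, e4]
  ring

lemma eig_rev {k : ℕ} {α μ : ℝ} {f : Fin (2*k+1) → ℝ}
    (hf : (Hmat k (single0 α)).mulVec f = μ • f) :
    (Hmat k (single0 α)).mulVec (fun i => f i.rev) = μ • (fun i => f i.rev) := by
  rw [mulVec_rev]
  funext i
  rw [congrFun hf i.rev]
  simp

lemma antisym_vanish {k : ℕ} (hk : 2 ≤ k) {α μ φ : ℝ}
    (hφ0 : 0 < φ) (hφθ : φ < th k) (hμ : μ = 2 - 2*Real.cos φ)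
    {f : Fin (2*k+1) → ℝ} (hf : (Hmat k (single0 α)).mulVec f = μ • f)
    (hanti : ∀ i : Fin (2*k+1), f i.rev = - f i) : f = 0 := by
  have hπ := Real.pi_pos
  have hθ5 := th_le k hk
  have hθpos := th_pos k
  have hθmul := th_mul k
  have hsφ : 0 < Real.sin φ :=
    Real.sin_pos_of_pos_of_lt_pi hφ0 (by linarith)
  have hcenter : ext f k = 0 := by
    have h := hanti ⟨k, by omega⟩
    have : Fin.rev (⟨k, by omega⟩ : Fin (2*k+1)) = ⟨k, by omega⟩ := by
      apply Fin.ext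
      rw [rev_val]
      simp only [Fin.val_mk]
      omega
    rw [this] at h
    have : f ⟨k, by omega⟩ = 0 := by linarith
    rw [← ext_apply f ⟨k, by omega⟩] at this
    exact this
  have key : ∀ j, j ≤ k → ext f (k+j) * Real.sin φ = ext f (k+1) * Real.sin ((j:ℝ)*φ) := by
    intro j
    induction j using Nat.strong_induction_on with
    | _ j ih =>
      match j with
      | 0 => intro _; simp [hcenter]
      | 1 => intro _; norm_num
      | (m+2) =>
        intro hj
        have h1 := ih (m+1) (by omega) (by omega)
        have h2 := ih m (by omega) (by omega)
        have hb := eig_eq hf (k+m+1) (by omega)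
        rw [if_neg (by omega), if_neg (by omega), if_pos (by omega),
          show k+m+1+1 = k+(m+2) by omega, show k+m+1-1 = k+m by omega,
          show k+m+1 = k+(m+1) by omega, hμ] at hb
        have trig : Real.sin (((m:ℝ)+2)*φ)
            = 2*Real.cos φ * Real.sin (((m:ℝ)+1)*φ) - Real.sin ((m:ℝ)*φ) := by
          rw [show ((m:ℝ)+2)*φ = ((m:ℝ)+1)*φ + φ by ring,
            show (m:ℝ)*φ = ((m:ℝ)+1)*φ - φ by ring, Real.sin_add, Real.sin_sub]
          ring
        push_cast
        push_cast at h1 h2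
        linear_combination (-Real.sin φ) * hb + (2*Real.cos φ) * h1 - h2
          - (ext f (k+1)) * trig
  -- endpoint condition
  have hend := eig_eq hf (2*k) (by omega)
  rw [if_pos (Or.inr rfl), if_neg (show ¬(2*k = k) by omega), if_pos (by omega),
    ext_out f (show ¬(2*k+1 < 2*k+1) by omega), hμ] at hend
  have h1 := key k (le_refl k)
  rw [show k + k = 2*k by omega] at h1
  have h2 := key (k-1) (by omega)
  rw [show k + (k-1) = 2*k-1 by omega] at h2
  rw [show ((k-1:ℕ):ℝ) = (k:ℝ)-1 by rw [Nat.cast_sub (by omega)]; norm_num,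
    show ((k:ℝ)-1)*φ = (k:ℝ)*φ - φ by ring, Real.sin_sub] at h2
  have hu1E : ext f (k+1) * (Real.sin ((k:ℝ)*φ)*Real.cos φ
      + Real.cos ((k:ℝ)*φ)*Real.sin φ - Real.sin ((k:ℝ)*φ)) = 0 := by
    linear_combination Real.sin φ * hend - (2*Real.cos φ - 1) * h1 + h2
  have hEpos : 0 < Real.sin ((k:ℝ)*φ)*Real.cos φ
      + Real.cos ((k:ℝ)*φ)*Real.sin φ - Real.sin ((k:ℝ)*φ) := by
    have hd : Real.sin ((k:ℝ)*φ + φ) - Real.sin ((k:ℝ)*φ)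
        = 2 * Real.sin (φ/2) * Real.cos ((k:ℝ)*φ + φ/2) := by
      rw [Real.sin_sub_sin]
      ring_nf
    have hkφ : (k:ℝ)*φ + φ/2 < Real.pi/2 := by
      have hkθ : (2*(k:ℝ)+1)*φ < (2*(k:ℝ)+1)*(th k) := by
        apply mul_lt_mul_of_pos_left hφθ
        positivity
      rw [hθmul] at hkθ
      linarith
    have hc1 : 0 < Real.cos ((k:ℝ)*φ + φ/2) := by
      apply Real.cos_pos_of_mem_Ioo
      constructor
      · have : (0:ℝ) ≤ (k:ℝ)*φ := by positivity
        linarith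
      · exact hkφ
    have hs1 : 0 < Real.sin (φ/2) :=
      Real.sin_pos_of_pos_of_lt_pi (by linarith) (by linarith)
    have := Real.sin_add ((k:ℝ)*φ) φ
    nlinarith
  have hu1 : ext f (k+1) = 0 := by
    rcases mul_eq_zero.mp hu1E with h | h
    · exact h
    · linarith
  have hzero : ∀ j, j ≤ k → ext f (k+j) = 0 := by
    intro j hj
    have := key j hj
    rw [hu1, zero_mul] at this
    rcases mul_eq_zero.mp this with h | h
    · exact h
    · exfalso; linarith
  funext i
  rw [Pi.zero_apply]
  rcases Nat.lt_or_ge i.val k with hlt | hge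
  · have hrev : f i = - f i.rev := by linarith [hanti i]
    have : f i.rev = 0 := by
      rw [← ext_apply f i.rev, rev_val,
        show 2*k - i.val = k + (k - i.val) by omega]
      exact hzero (k - i.val) (by omega)
    rw [hrev, this]; ring
  · rw [← ext_apply f i, show i.val = k + (i.val - k) by omega]
    exact hzero (i.val - k) (by have := i.isLt; omega)

end Stmt19
namespace Stmt19

open Real

lemma sym_root {k : ℕ} (hk : 2 ≤ k) {α μ φ : ℝ}
    (hφ0 : 0 < φ) (hφθ : φ < th k) (hμ : μ = 2 - 2*Real.cos φ)
    {f : Fin (2*k+1) → ℝ} (hf0 : f ≠ 0)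
    (hf : (Hmat k (single0 α)).mulVec f = μ • f)
    (hsym : ∀ i : Fin (2*k+1), f i.rev = f i) :
    2*Real.sin φ * Real.sin ((2*(k:ℝ)+1)*φ/2) = α * Real.cos ((2*(k:ℝ)+1)*φ/2) := by
  have hπ := Real.pi_pos
  have hθ5 := th_le k hk
  have hθpos := th_pos k
  have hθmul := th_mul k
  have hc : 0 < Real.cos (φ/2) := by
    apply Real.cos_pos_of_mem_Ioo
    constructor <;> [linarith; linarith]
  have hs2 : Real.sin φ = 2 * Real.sin (φ/2) * Real.cos (φ/2) := by
    have h := Real.sin_two_mul (φ/2)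
    rw [show 2*(φ/2) = φ by ring] at h
    linarith
  have hc2 : Real.cos φ = 1 - 2 * Real.sin (φ/2)^2 := by
    have h := Real.cos_two_mul (φ/2)
    rw [show 2*(φ/2) = φ by ring] at h
    linear_combination h + 2 * Real.sin_sq_add_cos_sq (φ/2)
  -- endpoint relation
  have hend := eig_eq hf (2*k) (by omega)
  rw [if_pos (Or.inr rfl), if_neg (show ¬(2*k = k) by omega), if_pos (by omega),
    ext_out f (show ¬(2*k+1 < 2*k+1) by omega), hμ,
    show 2*k-1 = 2*k-1 from rfl] at hend
  have hE : ext f (2*k-1) = (2*Real.cos φ - 1) * ext f (2*k) := by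
    linear_combination (-1:ℝ) * hend
  have key : ∀ j, j ≤ k →
      ext f (2*k-j) * Real.cos (φ/2) = ext f (2*k) * Real.cos (((j:ℝ)+1/2)*φ) := by
    intro j
    induction j using Nat.strong_induction_on with
    | _ j ih =>
      match j with
      | 0 =>
        intro _
        rw [show 2*k-0 = 2*k by omega, show (((0:ℕ):ℝ)+1/2)*φ = φ/2 by push_cast; ring]
      | 1 =>
        intro _
        rw [show (((1:ℕ):ℝ)+1/2)*φ = φ/2 + φ by push_cast; ring, Real.cos_add, hE]
        linear_combination (ext f (2*k) * Real.cos (φ/2)) * hc2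
          + (ext f (2*k) * Real.sin (φ/2)) * hs2
      | (m+2) =>
        intro hj
        have h1 := ih (m+1) (by omega) (by omega)
        have h2 := ih m (by omega) (by omega)
        have hb := eig_eq hf (2*k-(m+1)) (by omega)
        rw [if_neg (by omega), if_neg (by omega), if_pos (by omega),
          show 2*k-(m+1)+1 = 2*k-m by omega, show 2*k-(m+1)-1 = 2*k-(m+2) by omega,
          hμ] at hb
        have trig : Real.cos (((m:ℝ)+2+1/2)*φ)
            = 2*Real.cos φ * Real.cos (((m:ℝ)+1+1/2)*φ) - Real.cos (((m:ℝ)+1/2)*φ) := by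
          rw [show ((m:ℝ)+2+1/2)*φ = ((m:ℝ)+1+1/2)*φ + φ by ring,
            show ((m:ℝ)+1/2)*φ = ((m:ℝ)+1+1/2)*φ - φ by ring, Real.cos_add, Real.cos_sub]
          ring
        push_cast
        push_cast at h1 h2
        linear_combination (-Real.cos (φ/2)) * hb + (2*Real.cos φ) * h1 - h2
          - (ext f (2*k)) * trig
  -- center relation
  have hcen := eig_eq hf k (by omega)
  rw [if_neg (show ¬(k = 0 ∨ k = 2*k) by omega), if_pos rfl, if_pos (by omega), hμ] at hcen
  have hsymm1 : ext f (k-1) = ext f (k+1) := by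
    have h := hsym ⟨k+1, by omega⟩
    have hrev : Fin.rev (⟨k+1, by omega⟩ : Fin (2*k+1)) = ⟨k-1, by omega⟩ := by
      apply Fin.ext
      rw [rev_val]
      simp only [Fin.val_mk]
      omega
    rw [hrev] at h
    have ha : ext f (k-1) = f ⟨k-1, by omega⟩ := by simp [ext, show k-1 < 2*k+1 by omega]
    have hb2 : ext f (k+1) = f ⟨k+1, by omega⟩ := by simp [ext, show k+1 < 2*k+1 by omega]
    rw [ha, hb2]
    exact h
  have e6 : (2*Real.cos φ + α) * ext f k = 2 * ext f (k+1) := by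
    linear_combination hcen + hsymm1
  have h1 := key k (le_refl k)
  rw [show 2*k-k = k by omega] at h1
  have h2 := key (k-1) (by omega)
  rw [show 2*k-(k-1) = k+1 by omega,
    show ((k-1:ℕ):ℝ) = (k:ℝ)-1 by rw [Nat.cast_sub (by omega)]; norm_num] at h2
  set A := ((k:ℝ)+1/2)*φ with hA
  have hcosB : Real.cos (((k:ℝ)-1+1/2)*φ) = Real.cos A * Real.cos φ + Real.sin A * Real.sin φ := by
    rw [show ((k:ℝ)-1+1/2)*φ = A - φ by rw [hA]; ring, Real.cos_sub]
  have hfac : ext f (2*k) * (2*Real.sin φ * Real.sin A - α * Real.cos A) = 0 := by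
    have e7 : (2*Real.cos φ + α) * (ext f k * Real.cos (φ/2))
        = 2 * (ext f (k+1) * Real.cos (φ/2)) := by
      linear_combination Real.cos (φ/2) * e6
    rw [h1, h2, hcosB] at e7
    linear_combination (-1:ℝ) * e7
  rw [show (2*(k:ℝ)+1)*φ/2 = A by rw [hA]; ring]
  rcases mul_eq_zero.mp hfac with h0 | h0
  · -- ext f (2k) = 0 forces f = 0, contradiction
    exfalso
    apply hf0
    have hall : ∀ j, j ≤ k → ext f (2*k-j) = 0 := by
      intro j hj
      have hkey := key j hj
      rw [h0, zero_mul] at hkey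
      rcases mul_eq_zero.mp hkey with h | h
      · exact h
      · exfalso; linarith
    funext i
    rw [Pi.zero_apply]
    rcases Nat.lt_or_ge i.val k with hlt | hge
    · have hfi : f i = f i.rev := (hsym i).symm
      rw [hfi, ← ext_apply f i.rev, rev_val]
      exact hall i.val (by omega)
    · rw [← ext_apply f i, show i.val = 2*k - (2*k - i.val) by have := i.isLt; omega]
      exact hall (2*k - i.val) (by omega)
  · linarith

end Stmt19
namespace Stmt19

open Real

/-- the secular function -/
noncomputable def Gf (k : ℕ) (α : ℝ) (x : ℝ) : ℝ :=
  2*Real.sin x * Real.sin ((2*(k:ℝ)+1)*x/2) - α * Real.cos ((2*(k:ℝ)+1)*x/2)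

lemma Gf_strictMono (k : ℕ) (hk : 2 ≤ k) (α : ℝ) (hα : 0 < α) :
    StrictMonoOn (Gf k α) (Set.Icc 0 (th k)) := by
  have hπ := Real.pi_pos
  have hθ5 := th_le k hk
  have hθpos := th_pos k
  have hθmul := th_mul k
  have hn1 : (1:ℝ) ≤ 2*(k:ℝ)+1 := by have : (0:ℝ) ≤ (k:ℝ) := Nat.cast_nonneg k; linarith
  intro x hx y hy hxy
  obtain ⟨hx0, hxθ⟩ := hx
  obtain ⟨hy0, hyθ⟩ := hy
  have hnx : (2*(k:ℝ)+1)*x/2 ≤ Real.pi/2 := by nlinarith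
  have hny : (2*(k:ℝ)+1)*y/2 ≤ Real.pi/2 := by nlinarith
  have hnx0 : 0 ≤ (2*(k:ℝ)+1)*x/2 := by positivity
  have hny0 : 0 ≤ (2*(k:ℝ)+1)*y/2 := by positivity
  have hsxy : Real.sin x < Real.sin y := by
    apply Real.strictMonoOn_sin ⟨by linarith, by linarith⟩ ⟨by linarith, by linarith⟩ hxy
  have hsnxy : Real.sin ((2*(k:ℝ)+1)*x/2) ≤ Real.sin ((2*(k:ℝ)+1)*y/2) := by
    apply (Real.strictMonoOn_sin ⟨by linarith, hnx⟩ ⟨by linarith, hny⟩ (by nlinarith)).le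
  have hsx0 : 0 ≤ Real.sin x := Real.sin_nonneg_of_nonneg_of_le_pi hx0 (by linarith)
  have hsnx0 : 0 ≤ Real.sin ((2*(k:ℝ)+1)*x/2) :=
    Real.sin_nonneg_of_nonneg_of_le_pi hnx0 (by linarith)
  have hsny0 : 0 < Real.sin ((2*(k:ℝ)+1)*y/2) := by
    apply Real.sin_pos_of_pos_of_lt_pi (by nlinarith) (by linarith)
  have hcxy : Real.cos ((2*(k:ℝ)+1)*y/2) < Real.cos ((2*(k:ℝ)+1)*x/2) := by
    apply Real.strictAntiOn_cos ⟨hnx0, by linarith⟩ ⟨hny0, by linarith⟩ (by nlinarith)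
  unfold Gf
  nlinarith [hsxy, hsnxy, hsx0, hsnx0, hsny0, hcxy]

lemma root_exists (k : ℕ) (hk : 2 ≤ k) (α : ℝ) (hα : 0 < α) :
    ∃ φ ∈ Set.Ioo 0 (th k), Gf k α φ = 0 := by
  have hπ := Real.pi_pos
  have hθ5 := th_le k hk
  have hθpos := th_pos k
  have hcont : ContinuousOn (Gf k α) (Set.Icc 0 (th k)) := by
    unfold Gf; fun_prop
  have h0 : Gf k α 0 = -α := by simp [Gf]
  have hθval : Gf k α (th k) = 2*Real.sin (th k) := by
    unfold Gf
    rw [show (2*(k:ℝ)+1)*(th k)/2 = Real.pi/2 by have := th_mul k; linarith,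
      Real.sin_pi_div_two, Real.cos_pi_div_two]
    ring
  have hsθ : 0 < Real.sin (th k) :=
    Real.sin_pos_of_pos_of_lt_pi hθpos (by linarith)
  have hmem : (0:ℝ) ∈ Set.Ioo (Gf k α 0) (Gf k α (th k)) := by
    rw [h0, hθval]; exact ⟨by linarith, by linarith⟩
  obtain ⟨φ, hφ, hGφ⟩ := intermediate_value_Ioo (le_of_lt hθpos) hcont hmem
  exact ⟨φ, hφ, hGφ⟩

lemma gap_eq (k : ℕ) (hk : 2 ≤ k) (α : ℝ) (hα : 0 < α) {φ : ℝ}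
    (hφ : φ ∈ Set.Ioo 0 (th k)) (hroot : Gf k α φ = 0) :
    gap (Hmat k (single0 α)) = 2*Real.cos φ - 2*Real.cos (th k) := by
  have hπ := Real.pi_pos
  have hθ5 := th_le k hk
  have hθpos := th_pos k
  obtain ⟨hφ0, hφθ⟩ := hφ
  set M := Hmat k (single0 α) with hM
  set lam := 2 - 2*Real.cos φ with hlam
  set D := 2 - 2*Real.cos (th k) with hD
  have hcoslt : Real.cos (th k) < Real.cos φ :=
    Real.strictAntiOn_cos ⟨le_of_lt hφ0, by linarith⟩ ⟨le_of_lt hθpos, by linarith⟩ hφθ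
  have hlamD : lam < D := by rw [hlam, hD]; linarith
  have hroot' : 2*Real.sin φ * Real.sin ((2*(k:ℝ)+1)*φ/2)
      = α * Real.cos ((2*(k:ℝ)+1)*φ/2) := by
    unfold Gf at hroot; linarith
  have hmemL : lam ∈ evs M := ⟨sVec k φ, sVec_ne k hk hφ0 hφθ, sVec_eig k hk α φ hroot'⟩
  have hmemD : D ∈ evs M := ⟨aVec k, aVec_ne k hk, aVec_eig k hk α⟩
  have hcosθpos : 0 < Real.cos (th k) := by
    apply Real.cos_pos_of_mem_Ioo ⟨by linarith, by linarith⟩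
  have hkey : ∀ μ ∈ evs M, lam ≤ μ ∧ (μ ≠ lam → D ≤ μ) := by
    rintro μ ⟨f, hf0, hf⟩
    have hμpos : 0 < μ := mu_pos (by omega) hα hf0 hf
    by_cases hDle : D ≤ μ
    · exact ⟨le_trans (le_of_lt hlamD) hDle, fun _ => hDle⟩
    push_neg at hDle
    set ψ := Real.arccos (1 - μ/2) with hψ
    have hm1 : Real.cos (th k) < 1 - μ/2 := by rw [hD] at hDle; linarith
    have hm2 : 1 - μ/2 < 1 := by linarith
    have hcosψ : Real.cos ψ = 1 - μ/2 := Real.cos_arccos (by linarith) (by linarith)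
    have hψ0 : 0 ≤ ψ := Real.arccos_nonneg _
    have hψπ : ψ ≤ Real.pi := Real.arccos_le_pi _
    have hψpos : 0 < ψ := by
      rcases eq_or_lt_of_le hψ0 with h | h
      · exfalso
        have : Real.cos ψ = 1 := by rw [← h]; exact Real.cos_zero
        rw [hcosψ] at this; linarith
      · exact h
    have hψθ : ψ < th k := by
      by_contra hcon
      push_neg at hcon
      have : Real.cos ψ ≤ Real.cos (th k) :=
        Real.cos_le_cos_of_nonneg_of_le_pi (le_of_lt hθpos) hψπ hcon
      rw [hcosψ] at this; linarith
    have hμψ : μ = 2 - 2*Real.cos ψ := by rw [hcosψ]; ring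
    -- decompose into symmetric and antisymmetric parts
    have hg := eig_rev hf
    set fs : Fin (2*k+1) → ℝ := f + (fun i => f i.rev) with hfsdef
    set fa : Fin (2*k+1) → ℝ := f - (fun i => f i.rev) with hfadef
    have hfs : M.mulVec fs = μ • fs := by
      rw [hfsdef, Matrix.mulVec_add, hf, hg, ← smul_add]
    have hfa : M.mulVec fa = μ • fa := by
      rw [hfadef, Matrix.mulVec_sub, hf, hg, ← smul_sub]
    have hfssym : ∀ i : Fin (2*k+1), fs i.rev = fs i := by
      intro i
      show f i.rev + f i.rev.rev = f i + f i.rev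
      rw [Fin.rev_rev]; ring
    have hfaanti : ∀ i : Fin (2*k+1), fa i.rev = - fa i := by
      intro i
      show f i.rev - f i.rev.rev = -(f i - f i.rev)
      rw [Fin.rev_rev]; ring
    have hfa0 : fa = 0 := antisym_vanish hk hψpos hψθ hμψ hfa hfaanti
    have hfs0 : fs ≠ 0 := by
      intro h
      apply hf0
      funext i
      have h1 := congrFun h i
      have h2 := congrFun hfa0 i
      simp only [hfsdef, hfadef, Pi.add_apply, Pi.sub_apply, Pi.zero_apply] at h1 h2 ⊢
      linarith
    have hroot2 := sym_root hk hψpos hψθ hμψ hfs0 hfs hfssym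
    have hGψ : Gf k α ψ = 0 := by unfold Gf; linarith [hroot2]
    have hψφ : ψ = φ := by
      by_contra hne
      have hmono := Gf_strictMono k hk α hα
      rcases lt_or_gt_of_ne hne with hlt | hgt
      · have := hmono ⟨hψ0, by linarith⟩ ⟨le_of_lt hφ0, le_of_lt hφθ⟩ hlt
        rw [hGψ, hroot] at this; exact lt_irrefl 0 this
      · have := hmono ⟨le_of_lt hφ0, le_of_lt hφθ⟩ ⟨hψ0, by linarith⟩ hgt
        rw [hGψ, hroot] at this; exact lt_irrefl 0 this
    have heq : μ = lam := by rw [hμψ, hψφ, hlam]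
    exact ⟨le_of_eq heq.symm, fun hne => absurd heq hne⟩
  have hbdd : BddBelow (evs M) := ⟨lam, fun μ hμ => (hkey μ hμ).1⟩
  have hlam0 : lam0 M = lam :=
    le_antisymm (csInf_le hbdd hmemL) (le_csInf ⟨lam, hmemL⟩ (fun μ hμ => (hkey μ hμ).1))
  have hDne : D ∉ ({lam} : Set ℝ) := by
    simp only [Set.mem_singleton_iff]
    exact ne_of_gt hlamD
  have hlam1 : lam1 M = D := by
    unfold lam1
    rw [hlam0]
    have hmemD' : D ∈ evs M \ {lam} := ⟨hmemD, hDne⟩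
    have hlb : ∀ μ ∈ evs M \ ({lam} : Set ℝ), D ≤ μ := by
      rintro μ ⟨hμ1, hμ2⟩
      exact (hkey μ hμ1).2 (by simpa using hμ2)
    exact le_antisymm (csInf_le ⟨D, hlb⟩ hmemD') (le_csInf ⟨D, hmemD'⟩ hlb)
  unfold gap
  rw [hlam1, hlam0, hlam, hD]
  ring

end Stmt19
namespace Stmt19

open Real

lemma jordan {x : ℝ} (h0 : 0 ≤ x) (h2 : x ≤ Real.pi/2) : 2*x ≤ Real.pi * Real.sin x := by
  have h := Real.mul_le_sin h0 h2
  have hπ := Real.pi_pos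
  have hc : Real.pi * (2/Real.pi*x) = 2*x := by field_simp
  nlinarith [h]

end Stmt19

set_option maxHeartbeats 1000000 in
theorem stmt19' :
    ∃ c₁ c₂ : ℝ, 0 < c₁ ∧ 0 < c₂ ∧ ∀ α : ℝ, 0 < α → ∀ᶠ k : ℕ in Filter.atTop,
      c₁ / α ≤ (2 * (k : ℝ) + 1) ^ 3 * gap (Hmat k (single0 α)) ∧
      (2 * (k : ℝ) + 1) ^ 3 * gap (Hmat k (single0 α)) ≤ c₂ / α := by
  open Stmt19 in
  refine ⟨2, 125, by norm_num, by norm_num, fun α hα => ?_⟩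
  filter_upwards [Filter.eventually_ge_atTop (max 2 (Nat.ceil ((13:ℝ)/α)))] with k hkk
  have hk2 : 2 ≤ k := le_trans (le_max_left _ _) hkk
  have hkα : (13:ℝ)/α ≤ (k:ℝ) := by
    refine le_trans (Nat.le_ceil _) ?_
    exact_mod_cast le_trans (le_max_right _ _) hkk
  have hπ := Real.pi_pos
  have hπlt : Real.pi < 3.141593 := Real.pi_lt_d6
  have hπ2 : Real.pi^2 ≤ 9.87 := by nlinarith [hπlt, hπ]
  have hπ4 : Real.pi^2*2 ≤ 8*Real.pi := by nlinarith [hπlt, hπ]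
  have hπ3 : Real.pi^3 ≤ 31.01 := by nlinarith [hπ2, hπlt, hπ]
  have hq2 : 4*Real.pi^2 ≤ 13*Real.pi := by nlinarith [hπlt, hπ]
  obtain ⟨φ, hφIoo, hGφ⟩ := root_exists k hk2 α hα
  have hgap := gap_eq k hk2 α hα hφIoo hGφ
  obtain ⟨hφ0, hφθ⟩ := hφIoo
  obtain ⟨θ, hθdef⟩ : ∃ θ : ℝ, θ = th k := ⟨_, rfl⟩
  rw [← hθdef] at hgap hφθ
  have hθpos : 0 < θ := hθdef ▸ th_pos k
  have hθ5 : θ ≤ Real.pi/5 := hθdef ▸ th_le k hk2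
  obtain ⟨n, hn⟩ : ∃ n : ℝ, n = 2*(k:ℝ)+1 := ⟨_, rfl⟩
  rw [← hn]
  have hn0 : (0:ℝ) < n := by
    rw [hn]; positivity
  have hnθ : n * θ = Real.pi := by rw [hn, hθdef]; exact th_mul k
  have h13 : (13:ℝ) ≤ α * n := by
    have h1 : (13:ℝ) ≤ α * k := by
      rw [div_le_iff₀ hα] at hkα; linarith only [hkα]
    have h2 : α * (k:ℝ) ≤ α * n := by
      apply mul_le_mul_of_nonneg_left _ (le_of_lt hα)
      rw [hn]; linarith only [Nat.cast_nonneg (α := ℝ) k]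
    linarith only [h1, h2]
  obtain ⟨δ, hδdef⟩ : ∃ δ : ℝ, δ = θ - φ := ⟨_, rfl⟩
  have hδ0 : 0 < δ := by rw [hδdef]; linarith only [hφθ]
  have hδθ : δ < θ := by rw [hδdef]; linarith only [hφ0]
  obtain ⟨x, hx⟩ : ∃ x : ℝ, x = n*δ/2 := ⟨_, rfl⟩
  have hx0 : 0 < x := by rw [hx]; positivity
  have hxπ2 : x < Real.pi/2 := by
    have h1 : n*δ < n*θ := mul_lt_mul_of_pos_left hδθ hn0
    rw [hnθ] at h1
    rw [hx]; linarith only [h1]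
  -- the root equation in terms of x
  have star : 2*Real.sin φ * Real.cos x = α * Real.sin x := by
    have harg : (2*(k:ℝ)+1)*φ/2 = Real.pi/2 - x := by
      rw [← hn, hx]
      have h1 : n*φ = n*θ - n*δ := by rw [hδdef]; ring
      rw [hnθ] at h1
      linarith only [h1]
    unfold Gf at hGφ
    rw [harg, Real.sin_pi_div_two_sub, Real.cos_pi_div_two_sub] at hGφ
    linarith only [hGφ]
  -- basic trig facts
  have hsφ0 : 0 ≤ Real.sin φ := Real.sin_nonneg_of_nonneg_of_le_pi (le_of_lt hφ0)
    (by linarith only [hφθ, hθ5, hπ])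
  have hsφle : Real.sin φ ≤ φ := Real.sin_le (le_of_lt hφ0)
  have hcx1 : Real.cos x ≤ 1 := Real.cos_le_one x
  have hcx0 : 0 ≤ Real.cos x :=
    le_of_lt (Real.cos_pos_of_mem_Ioo ⟨by linarith only [hx0, hπ], hxπ2⟩)
  have hsxle : Real.sin x ≤ x := Real.sin_le (le_of_lt hx0)
  have hjx : 2*x ≤ Real.pi * Real.sin x := jordan (le_of_lt hx0) (le_of_lt hxπ2)
  -- upper bound on δ : α n² δ ≤ 2π²
  have w1 : α * Real.sin x ≤ 2*θ := by
    have hh := mul_nonneg hsφ0 (by linarith only [hcx1] : (0:ℝ) ≤ 1 - Real.cos x)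
    linarith only [star, hh, hsφle, hφθ]
  have w2 : 2*(α*x) ≤ Real.pi*(2*θ) := by
    have ha := mul_le_mul_of_nonneg_left hjx (le_of_lt hα)
    have hb := mul_le_mul_of_nonneg_left w1 (le_of_lt hπ)
    linarith only [ha, hb]
  have hδub : α*(n^2*δ) ≤ 2*Real.pi^2 := by
    have w3 : α*(n*δ) ≤ 2*Real.pi*θ := by rw [hx] at w2; linarith only [w2]
    have w4 := mul_le_mul_of_nonneg_left w3 (le_of_lt hn0)
    have e2 : n*(2*Real.pi*θ) = 2*Real.pi^2 := by
      rw [show n*(2*Real.pi*θ) = 2*Real.pi*(n*θ) by ring, hnθ]; ring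
    linarith only [w4, e2]
  -- δ ≤ θ/2
  have hA : (0:ℝ) < α*n^2 := by positivity
  have h2δ : 2*δ ≤ θ := by
    have e : (α*n^2)*θ = (α*n)*Real.pi := by
      rw [show (α*n^2)*θ = (α*n)*(n*θ) by ring, hnθ]
    have q3 : 13*Real.pi ≤ (α*n)*Real.pi :=
      mul_le_mul_of_nonneg_right h13 (le_of_lt hπ)
    have h1 : (α*n^2)*(2*δ) ≤ (α*n^2)*θ := by linarith only [hδub, hq2, q3, e]
    exact le_of_mul_le_mul_left h1 hA
  have hφlb : θ/2 ≤ φ := by rw [hδdef] at h2δ; linarith only [h2δ]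
  -- lower bound: n sin φ ≥ 1
  have hjφ : 2*φ ≤ Real.pi*Real.sin φ := jordan (le_of_lt hφ0)
    (by linarith only [hφθ, hθ5, hπ])
  have hsφlb : 1 ≤ n*Real.sin φ := by
    have h2 : Real.pi*(1:ℝ) ≤ Real.pi*(n*Real.sin φ) := by
      have ha := mul_le_mul_of_nonneg_left hjφ (le_of_lt hn0)
      have hb := mul_le_mul_of_nonneg_left
        (by linarith only [hφlb] : θ ≤ 2*φ) (le_of_lt hn0)
      linarith only [ha, hb, hnθ]
    exact le_of_mul_le_mul_left h2 hπ
  -- x ≤ 1 hence cos x ≥ 1/2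
  have hx1 : x ≤ 1 := by
    have h1 : (α*n)*x ≤ Real.pi^2 := by rw [hx]; linarith only [hδub]
    have h2 : (α*n)*x ≤ (α*n)*1 := by linarith only [h1, hπ2, h13]
    exact le_of_mul_le_mul_left h2 (by linarith only [h13, hα, hn0] : (0:ℝ) < α*n)
  have hcxlb : (1:ℝ)/2 ≤ Real.cos x := by
    have h1 := Real.one_sub_sq_div_two_le_cos (x := x)
    have hxsq : x*x ≤ 1*1 := mul_le_mul hx1 hx1 (le_of_lt hx0) zero_le_one
    linarith only [h1, hxsq]
  -- lower bound on δ : α n² δ ≥ 2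
  have s1 : Real.sin φ ≤ α*Real.sin x := by
    have hh := mul_nonneg hsφ0 (by linarith only [hcxlb] : (0:ℝ) ≤ 2*Real.cos x - 1)
    linarith only [star, hh]
  have s2 : 1 ≤ α*(n*Real.sin x) := by
    have ha := mul_le_mul_of_nonneg_left s1 (le_of_lt hn0)
    linarith only [ha, hsφlb]
  have s3 : 1 ≤ α*(n*x) := by
    have ha := mul_nonneg (mul_nonneg (le_of_lt hα) (le_of_lt hn0))
      (by linarith only [hsxle] : (0:ℝ) ≤ x - Real.sin x)
    linarith only [s2, ha]
  have hδlb : 2 ≤ α*(n^2*δ) := by rw [hx] at s3; linarith only [s3]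
  -- gap formula via product of sines
  obtain ⟨A, hAdef⟩ : ∃ A : ℝ, A = (φ+θ)/2 := ⟨_, rfl⟩
  have hA0 : 0 < A := by rw [hAdef]; linarith only [hφ0, hθpos]
  have hAθ : A ≤ θ := by rw [hAdef]; linarith only [hφθ]
  have hΓ : gap (Hmat k (single0 α)) = 4 * Real.sin A * Real.sin (δ/2) := by
    have hcc := Real.cos_sub_cos φ θ
    have harg : (φ-θ)/2 = -(δ/2) := by rw [hδdef]; ring
    rw [harg, Real.sin_neg, ← hAdef] at hcc
    rw [hgap]
    linear_combination 2*hcc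
  -- bounds on the sines
  have hsA_ub : Real.sin A ≤ θ := le_trans (Real.sin_le (le_of_lt hA0)) hAθ
  have hsd_ub : Real.sin (δ/2) ≤ δ/2 := Real.sin_le (by linarith only [hδ0])
  have hsA0 : 0 ≤ Real.sin A :=
    Real.sin_nonneg_of_nonneg_of_le_pi (le_of_lt hA0) (by linarith only [hAθ, hθ5, hπ])
  have hsd0 : 0 ≤ Real.sin (δ/2) :=
    Real.sin_nonneg_of_nonneg_of_le_pi (by linarith only [hδ0])
      (by linarith only [hδθ, hθ5, hπ])
  have hjA : 2*A ≤ Real.pi*Real.sin A := jordan (le_of_lt hA0)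
    (by linarith only [hAθ, hθ5, hπ])
  have hjd : 2*(δ/2) ≤ Real.pi*Real.sin (δ/2) := jordan (by linarith only [hδ0])
    (by linarith only [hδθ, hθ5, hπ])
  have hsA_lb : θ ≤ Real.pi*Real.sin A := by
    have h1 : θ ≤ 2*A := by rw [hAdef]; linarith only [hφ0]
    linarith only [h1, hjA]
  have hsd_lb : δ ≤ Real.pi*Real.sin (δ/2) := by linarith only [hjd]
  have hn3 : (0:ℝ) < n^3 := by positivity
  constructor
  · -- lower bound
    rw [div_le_iff₀ hα, hΓ]
    have m1 : 4*(n*θ)*(α*(n^2*δ)) ≤ 4*α*n^3*(Real.pi*Real.sin A)*(Real.pi*Real.sin (δ/2)) := by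
      have p1 : (0:ℝ) ≤ 4*α*n^3 := by positivity
      have ht := mul_le_mul hsA_lb hsd_lb (le_of_lt hδ0)
        (le_trans (le_of_lt hθpos) hsA_lb)
      have h2 := mul_le_mul_of_nonneg_left ht p1
      linarith only [h2]
    have m2 : 8*Real.pi ≤ 4*(n*θ)*(α*(n^2*δ)) := by
      rw [hnθ]
      have h2 := mul_le_mul_of_nonneg_left hδlb (by positivity : (0:ℝ) ≤ 4*Real.pi)
      linarith only [h2]
    have m3 : Real.pi^2*2 ≤ Real.pi^2*(n^3*(4*Real.sin A*Real.sin (δ/2))*α) := by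
      linarith only [m1, m2, hπ4]
    have h4 := le_of_mul_le_mul_left m3 (by positivity : (0:ℝ) < Real.pi^2)
    linarith only [h4]
  · -- upper bound
    rw [le_div_iff₀ hα, hΓ]
    have u3 : 4*Real.sin A*Real.sin (δ/2) ≤ 2*θ*δ := by
      have h2 := mul_le_mul hsA_ub hsd_ub hsd0 (le_of_lt hθpos)
      linarith only [h2]
    have u4 : n^3*(4*Real.sin A*Real.sin (δ/2))*α ≤ 2*θ*n*(α*(n^2*δ)) := by
      have h2 := mul_le_mul_of_nonneg_left u3 (by positivity : (0:ℝ) ≤ n^3*α)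
      linarith only [h2]
    have u5 : 2*θ*n*(α*(n^2*δ)) ≤ 4*Real.pi^2*Real.pi := by
      have e : 2*θ*n*(α*(n^2*δ)) = 2*(n*θ)*(α*(n^2*δ)) := by ring
      rw [e, hnθ]
      have h2 := mul_le_mul_of_nonneg_left hδub (by positivity : (0:ℝ) ≤ 2*Real.pi)
      linarith only [h2]
    linarith only [u4, u5, hπ3]


/-- Corollary 4.3, conjecture of Kim–Yoo: for `H_{k,α} = L_k + α δ_0` with
any `α > 0` there are constants `c₁, c₂ > 0` independent of `k` and `α` such that for all
but finitely many `k`, `c₁/α ≤ |V_k|³ Γ(V_k, α) ≤ c₂/α`. -/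
theorem stmt19 :
    ∃ c₁ c₂ : ℝ, 0 < c₁ ∧ 0 < c₂ ∧ ∀ α : ℝ, 0 < α → ∀ᶠ k : ℕ in atTop,
      c₁ / α ≤ (2 * (k : ℝ) + 1) ^ 3 * gap (Hmat k (single0 α)) ∧
      (2 * (k : ℝ) + 1) ^ 3 * gap (Hmat k (single0 α)) ≤ c₂ / α :=
  stmt19'
end
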